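/- arXiv:0911.2589 — 9 statements merged into one kernel-verified Lean document; each statement's English description precedes it below -/
import Mathlib

section
/- If f : E(G) → E(H) is a cut-continuous mapping (the preimage of every cut of H is a cut of G), then x(G) ≤ x(H). -/
attribute [local instance] Classical.propDecidable

/-- A cut in a graph: the set of edges leaving some vertex set `W`. -/
def IsCut {V : Type*} (G : SimpleGraph V) (X : Set (Sym2 V)) : Prop :=
  ∃ W : Set V, X = {e | e ∈ G.edgeSet ∧ ∃ a b, e = s(a, b) ∧ a ∈ W ∧ b ∉ W}

/-- An `n/k`-cover: `n` cuts covering every edge at least `k` times. -/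
def HasCover {V : Type*} (G : SimpleGraph V) (n k : ℕ) : Prop :=
  ∃ X : Fin n → Set (Sym2 V), (∀ i, IsCut G (X i)) ∧
    ∀ e ∈ G.edgeSet, k ≤ (Finset.univ.filter fun i => e ∈ X i).card

/-- The fractional cut-covering number `x(G)`. -/
noncomputable def cutCover {V : Type*} (G : SimpleGraph V) : ℝ :=
  sInf { q : ℝ | ∃ n k : ℕ, 0 < k ∧ q = n / k ∧ HasCover G n k }

/-- A mapping on edge sets is cut-continuous if the preimage of every cut is a cut. -/
def CutContinuous {V W : Type*} (G : SimpleGraph V) (H : SimpleGraph W)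
    (f : G.edgeSet → H.edgeSet) : Prop :=
  ∀ U : Set (Sym2 W), IsCut H U →
    IsCut G {e | ∃ h : e ∈ G.edgeSet, (f ⟨e, h⟩ : Sym2 W) ∈ U}

/-- Any finite graph has a `|W|/1` cover by vertex stars. -/
lemma hasCover_card_one {W : Type*} [Fintype W] (H : SimpleGraph W) :
    HasCover H (Fintype.card W) 1 := by
  classical
  set eqv := (Fintype.equivFin W).symm
  refine ⟨fun i => {e | e ∈ H.edgeSet ∧ ∃ a b, e = s(a, b) ∧ a ∈ ({eqv i} : Set W) ∧
    b ∉ ({eqv i} : Set W)}, fun i => ⟨{eqv i}, rfl⟩, ?_⟩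
  intro e he
  induction e with
  | h a b =>
    have hab : a ≠ b := (H.mem_edgeSet.mp he).ne
    refine Finset.card_pos.mpr ⟨(Fintype.equivFin W) a, ?_⟩
    simp only [Finset.mem_filter, Finset.mem_univ, true_and, Set.mem_setOf_eq]
    refine ⟨he, a, b, rfl, ?_, ?_⟩
    · simp [eqv]
    · simp only [eqv, Equiv.symm_apply_apply, Set.mem_singleton_iff]
      exact fun h => hab h.symm

/-- If there is a cut-continuous mapping from `G` to `H`, then `x(G) ≤ x(H)`. -/
theorem cutContinuous_cutCover_le {V W : Type*} [Fintype V] [Fintype W]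
    (G : SimpleGraph V) (H : SimpleGraph W)
    (hG : G.edgeSet.Nonempty) (hH : H.edgeSet.Nonempty)
    (f : G.edgeSet → H.edgeSet) (hf : CutContinuous G H f) :
    cutCover G ≤ cutCover H := by
  apply csInf_le_csInf
  · refine ⟨0, fun q hq => ?_⟩
    obtain ⟨n, k, hk, rfl, -⟩ := hq
    positivity
  · exact ⟨(Fintype.card W : ℝ) / 1, Fintype.card W, 1, one_pos, by norm_num, hasCover_card_one H⟩
  · rintro q ⟨n, k, hk, rfl, X, hcut, hcov⟩
    refine ⟨n, k, hk, rfl, fun i => {e | ∃ h : e ∈ G.edgeSet, (f ⟨e, h⟩ : Sym2 W) ∈ X i},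
      fun i => hf _ (hcut i), ?_⟩
    intro e he
    have key : ∀ i : Fin n, (e ∈ {e | ∃ h : e ∈ G.edgeSet, (f ⟨e, h⟩ : Sym2 W) ∈ X i}) ↔
        ((f ⟨e, he⟩ : Sym2 W) ∈ X i) := by
      intro i
      constructor
      · rintro ⟨h, hm⟩; exact hm
      · intro hm; exact ⟨he, hm⟩
    refine le_trans (hcov _ (f ⟨e, he⟩).2) (Finset.card_le_card fun i hi => ?_)
    simp only [Finset.mem_filter, Finset.mem_univ, true_and] at hi ⊢
    exact (key i).mpr hi
end

section
/- If G is edge-transitive, then x(G) = 1/b(G). -/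
attribute [local instance] Classical.propDecidable

/-- The maximum size of a cut of `G`. -/
noncomputable def maxCut {V : Type*} [Fintype V] (G : SimpleGraph V) : ℕ :=
  sSup { m : ℕ | ∃ X : Set (Sym2 V), IsCut G X ∧ m = X.ncard }

/-- The bipartite density `b(G) = MAXCUT(G)/|E(G)|`. -/
noncomputable def bipDensity {V : Type*} [Fintype V] (G : SimpleGraph V) : ℝ :=
  maxCut G / G.edgeSet.ncard

/-- `G` is edge-transitive: its automorphism group acts transitively on edges. -/
def EdgeTransitive {V : Type*} (G : SimpleGraph V) : Prop :=
  ∀ e ∈ G.edgeSet, ∀ f ∈ G.edgeSet, ∃ φ : G ≃g G, Sym2.map (⇑φ) e = f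

/-! ### Auxiliary material -/

def cutOf {V : Type*} (G : SimpleGraph V) (W : Set V) : Set (Sym2 V) :=
  {e | e ∈ G.edgeSet ∧ ∃ a b, e = s(a, b) ∧ a ∈ W ∧ b ∉ W}

lemma cutOf_subset {V : Type*} (G : SimpleGraph V) (W : Set V) :
    cutOf G W ⊆ G.edgeSet := fun _ he => he.1

lemma IsCut.subset {V : Type*} {G : SimpleGraph V} {X : Set (Sym2 V)}
    (h : IsCut G X) : X ⊆ G.edgeSet := by
  obtain ⟨W, rfl⟩ := h; exact cutOf_subset G W

lemma bddAbove_cutSet {V : Type*} [Fintype V] (G : SimpleGraph V) :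
    BddAbove { m : ℕ | ∃ X : Set (Sym2 V), IsCut G X ∧ m = X.ncard } := by
  refine ⟨G.edgeSet.ncard, ?_⟩
  rintro m ⟨X, hX, rfl⟩
  exact Set.ncard_le_ncard hX.subset (Set.toFinite _)

lemma exists_maxCut {V : Type*} [Fintype V] (G : SimpleGraph V) :
    ∃ X : Set (Sym2 V), IsCut G X ∧ X.ncard = maxCut G := by
  have h := Nat.sSup_mem (s := { m : ℕ | ∃ X : Set (Sym2 V), IsCut G X ∧ m = X.ncard })
    ⟨0, ∅, ⟨∅, by ext e; simp [cutOf]⟩, by simp⟩ (bddAbove_cutSet G)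
  obtain ⟨X, hX, h⟩ := h
  exact ⟨X, hX, h.symm⟩

lemma le_maxCut {V : Type*} [Fintype V] {G : SimpleGraph V} {X : Set (Sym2 V)}
    (hX : IsCut G X) : X.ncard ≤ maxCut G :=
  le_csSup (bddAbove_cutSet G) ⟨X, hX, rfl⟩

lemma maxCut_pos {V : Type*} [Fintype V] (G : SimpleGraph V)
    (hG : G.edgeSet.Nonempty) : 0 < maxCut G := by
  obtain ⟨e, he⟩ := hG
  induction e with
  | _ a b =>
    have hab : G.Adj a b := he
    have hmem : s(a, b) ∈ cutOf G {a} :=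
      ⟨he, a, b, rfl, rfl, fun h => hab.ne (h.symm)⟩
    calc 0 < (cutOf G {a}).ncard := Set.ncard_pos (Set.toFinite _) |>.mpr ⟨_, hmem⟩
      _ ≤ maxCut G := le_maxCut ⟨{a}, rfl⟩

lemma cover_bound {V : Type*} [Fintype V] {G : SimpleGraph V} {n k : ℕ}
    (h : HasCover G n k) : k * G.edgeSet.ncard ≤ n * maxCut G := by
  classical
  obtain ⟨X, hcut, hcov⟩ := h
  set E := (Set.toFinite G.edgeSet).toFinset with hE
  have hEcard : E.card = G.edgeSet.ncard := (Set.ncard_eq_toFinset_card _ _).symm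
  calc k * G.edgeSet.ncard = ∑ _e ∈ E, k := by
        rw [Finset.sum_const, hEcard, smul_eq_mul, mul_comm]
    _ ≤ ∑ e ∈ E, (Finset.univ.filter fun i => e ∈ X i).card :=
        Finset.sum_le_sum fun e he => hcov e (by simpa [hE, Set.Finite.mem_toFinset] using he)
    _ = ∑ i : Fin n, (E.filter fun e => e ∈ X i).card := by
        simp_rw [Finset.card_filter]
        exact Finset.sum_comm
    _ ≤ ∑ _i : Fin n, maxCut G := by
        refine Finset.sum_le_sum fun i _ => ?_
        have heq : (E.filter fun e => e ∈ X i) = (Set.toFinite (X i)).toFinset := by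
          ext e
          simp only [Finset.mem_filter, Set.Finite.mem_toFinset, hE]
          exact ⟨fun h => h.2, fun h => ⟨(hcut i).subset h, h⟩⟩
        rw [heq, ← Set.ncard_eq_toFinset_card]
        exact le_maxCut (hcut i)
    _ = n * maxCut G := by simp [Finset.sum_const, Finset.card_univ]

lemma cutOf_image {V : Type*} {G : SimpleGraph V} (φ : G ≃g G) (W : Set V) :
    Sym2.map ⇑φ '' cutOf G W = cutOf G (⇑φ '' W) := by
  ext e
  constructor
  · rintro ⟨e0, ⟨he0, a, b, rfl, ha, hb⟩, rfl⟩
    refine ⟨?_, φ a, φ b, by simp, ⟨a, ha, rfl⟩, ?_⟩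
    · simpa using φ.map_adj_iff.mpr he0
    · rintro ⟨b0, hb0, hbe⟩
      exact hb (φ.injective hbe ▸ hb0)
  · rintro ⟨he, a', b', heq, ⟨a, ha, rfl⟩, hb'⟩
    refine ⟨s(a, φ.symm b'), ⟨?_, a, φ.symm b', rfl, ha, ?_⟩, ?_⟩
    · have : G.Adj (φ a) b' := by rw [← SimpleGraph.mem_edgeSet, ← heq]; exact he
      have := φ.symm.map_adj_iff.mpr this
      simpa using this
    · intro hmem
      exact hb' ⟨φ.symm b', hmem, by simp⟩
    · rw [heq]; simp

lemma mem_cut_image {V : Type*} {G : SimpleGraph V} (φ : G ≃g G) (W : Set V)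
    (e : Sym2 V) : e ∈ cutOf G (⇑φ '' W) ↔ Sym2.map ⇑φ.symm e ∈ cutOf G W := by
  rw [← cutOf_image]
  constructor
  · rintro ⟨e0, h, rfl⟩
    have : Sym2.map (⇑φ.symm) (Sym2.map (⇑φ) e0) = e0 := by
      rw [Sym2.map_map]
      have hcomp : ⇑φ.symm ∘ ⇑φ = id := funext fun x => φ.symm_apply_apply x
      rw [hcomp, Sym2.map_id, id]
    rwa [this]
  · intro h
    refine ⟨Sym2.map ⇑φ.symm e, h, ?_⟩
    rw [Sym2.map_map]
    have hcomp : ⇑φ ∘ ⇑φ.symm = id := funext fun x => φ.apply_symm_apply x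
    rw [hcomp, Sym2.map_id, id]

lemma ncard_cut_image {V : Type*} {G : SimpleGraph V} (φ : G ≃g G) (W : Set V) :
    (cutOf G (⇑φ '' W)).ncard = (cutOf G W).ncard := by
  rw [← cutOf_image]
  exact Set.ncard_image_of_injective _ (Sym2.map.injective φ.injective)

/-- If `G` is edge-transitive, then `x(G) = 1/b(G)`. -/
theorem edgeTransitive_cutCover_eq {V : Type*} [Fintype V] (G : SimpleGraph V)
    (hG : G.edgeSet.Nonempty) (ht : EdgeTransitive G) :
    cutCover G = 1 / bipDensity G := by
  classical
  set m := G.edgeSet.ncard with hm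
  have hm0 : 0 < m := Set.ncard_pos (Set.toFinite _) |>.mpr hG
  set c := maxCut G with hc
  have hc0 : 0 < c := maxCut_pos G hG
  -- a maximum cut
  obtain ⟨X0, ⟨W, rfl⟩, hX0⟩ := exists_maxCut G
  have hX0' : (cutOf G W).ncard = c := hX0
  -- the automorphism group is finite
  haveI : Finite (G ≃g G) :=
    Finite.of_injective (fun φ => (φ : G ≃g G).toEquiv) RelIso.toEquiv_injective
  haveI : Fintype (G ≃g G) := Fintype.ofFinite _
  set n := Fintype.card (G ≃g G) with hn
  have hn0 : 0 < n := Fintype.card_pos_iff.mpr ⟨SimpleGraph.Iso.refl⟩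
  set Xf : (G ≃g G) → Set (Sym2 V) := fun φ => cutOf G (⇑φ '' W) with hXf
  set N : Sym2 V → ℕ := fun e => (Finset.univ.filter fun φ : G ≃g G => e ∈ Xf φ).card with hN
  -- N is constant on edges
  have hNconst : ∀ e ∈ G.edgeSet, ∀ f ∈ G.edgeSet, N e = N f := by
    intro e he f hf
    obtain ⟨ψ, hψ⟩ := ht e he f hf
    refine Finset.card_bij' (fun φ _ => (φ : G ≃g G).trans ψ) (fun φ _ => φ.trans ψ.symm)
      ?_ ?_ ?_ ?_
    · intro φ hφ
      simp only [Finset.mem_filter, Finset.mem_univ, true_and] at hφ ⊢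
      rw [hXf] at hφ ⊢
      rw [mem_cut_image] at hφ ⊢
      have h1 : Sym2.map (⇑(RelIso.trans φ ψ).symm) f = Sym2.map (⇑φ.symm) e := by
        rw [← hψ, Sym2.map_map]
        have hfun : ⇑(RelIso.trans φ ψ).symm ∘ ⇑ψ = ⇑φ.symm := by
          funext x
          apply (RelIso.trans φ ψ).injective
          simp
        rw [hfun]
      rwa [h1]
    · intro φ hφ
      simp only [Finset.mem_filter, Finset.mem_univ, true_and] at hφ ⊢
      rw [hXf] at hφ ⊢
      rw [mem_cut_image] at hφ ⊢
      have h2 : Sym2.map (⇑(RelIso.trans φ ψ.symm).symm) e = Sym2.map (⇑φ.symm) f := by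
        rw [← hψ, Sym2.map_map]
        have hfun : ⇑(RelIso.trans φ ψ.symm).symm = ⇑φ.symm ∘ ⇑ψ := by
          funext x
          apply (RelIso.trans φ ψ.symm).injective
          simp
        rw [hfun]
      rwa [h2]
    · intro φ _
      ext x
      simp
    · intro φ _
      ext x
      simp
  -- pick a base edge and let k be its multiplicity
  obtain ⟨e0, he0⟩ := hG
  set k := N e0 with hk
  -- double counting: m * k = n * c
  set E := (Set.toFinite G.edgeSet).toFinset with hE
  have hEcard : E.card = m := (Set.ncard_eq_toFinset_card _ _).symm
  have hdouble : m * k = n * c := by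
    have h1 : ∑ e ∈ E, N e = m * k := by
      rw [Finset.sum_congr rfl fun e he =>
        hNconst e (by simpa [hE, Set.Finite.mem_toFinset] using he) e0 he0]
      rw [Finset.sum_const, hEcard, smul_eq_mul]
    have h2 : ∑ e ∈ E, N e = n * c := by
      simp_rw [hN, Finset.card_filter]
      rw [Finset.sum_comm]
      have key : ∀ φ : G ≃g G, (∑ e ∈ E, if e ∈ Xf φ then 1 else 0) = c := by
        intro φ
        rw [← Finset.card_filter]
        have heq : (E.filter fun e => e ∈ Xf φ) = (Set.toFinite (Xf φ)).toFinset := by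
          ext e
          simp only [Finset.mem_filter, Set.Finite.mem_toFinset, hE]
          exact ⟨fun h => h.2, fun h => ⟨cutOf_subset G _ h, h⟩⟩
        rw [heq, ← Set.ncard_eq_toFinset_card]
        show (cutOf G (⇑φ '' W)).ncard = c
        rw [ncard_cut_image]
        exact hX0'
      rw [Finset.sum_congr rfl fun φ _ => key φ, Finset.sum_const, Finset.card_univ,
        smul_eq_mul]
    omega
  have hk0 : 0 < k := by
    rcases Nat.eq_zero_or_pos k with h | h
    · rw [h, mul_zero] at hdouble
      have hpos : 0 < n * c := Nat.mul_pos hn0 hc0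
      omega
    · exact h
  -- the cover
  have hcover : HasCover G n k := by
    set enum : Fin n ≃ (G ≃g G) := (Fintype.equivFin (G ≃g G)).symm with henum
    refine ⟨fun i => Xf (enum i), fun i => ⟨⇑(enum i) '' W, rfl⟩, ?_⟩
    intro e he
    have hcard : (Finset.univ.filter fun i : Fin n => e ∈ Xf (enum i)).card = N e := by
      rw [hN]
      refine Finset.card_bij' (fun i _ => enum i) (fun φ _ => enum.symm φ) ?_ ?_ ?_ ?_
      · intro i hi
        simpa using (Finset.mem_filter.mp hi).2
      · intro φ hφ
        simp only [Finset.mem_filter, Finset.mem_univ, true_and] at hφ ⊢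
        simpa using hφ
      · intro i _
        simp
      · intro φ _
        simp
    rw [hcard, hk]
    exact (hNconst e0 he0 e he).le
  -- the infimum equals m / c
  have hmem : (m : ℝ) / c ∈ { q : ℝ | ∃ n k : ℕ, 0 < k ∧ q = n / k ∧ HasCover G n k } := by
    refine ⟨n, k, hk0, ?_, hcover⟩
    rw [div_eq_div_iff (Nat.cast_pos.mpr hc0).ne' (Nat.cast_pos.mpr hk0).ne']
    exact_mod_cast congrArg (Nat.cast (R := ℝ)) hdouble
  have hlb : ∀ q ∈ { q : ℝ | ∃ n k : ℕ, 0 < k ∧ q = n / k ∧ HasCover G n k },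
      (m : ℝ) / c ≤ q := by
    rintro q ⟨n', k', hk', rfl, hcov'⟩
    rw [div_le_div_iff₀ (Nat.cast_pos.mpr hc0) (Nat.cast_pos.mpr hk')]
    have h := cover_bound hcov'
    rw [mul_comm] at h
    exact_mod_cast h
  rw [cutCover, bipDensity, one_div_div]
  exact le_antisymm
    (csInf_le ⟨0, by rintro q ⟨n', k', hk', rfl, _⟩; positivity⟩ hmem)
    (le_csInf ⟨_, hmem⟩ hlb)
end

section
/- The fractional cut-covering number of the Petersen graph equals 5/4. -/
abbrev V5 := {s : Finset (Fin 5) // s.card = 2}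

def Gc : SimpleGraph V5 := SimpleGraph.fromRel (fun s t => Disjoint s.1 t.1)

instance : DecidableRel Gc.Adj := fun a b =>
  inferInstanceAs (Decidable (a ≠ b ∧ (Disjoint a.1 b.1 ∨ Disjoint b.1 a.1)))

def E5 : Finset (Sym2 V5) := Gc.edgeFinset

lemma E5_mem (e : Sym2 V5) : e ∈ E5 ↔ e ∈ Gc.edgeSet := Gc.mem_edgeFinset

def v0 : V5 := ⟨{0,1}, rfl⟩
def v1 : V5 := ⟨{0,2}, rfl⟩
def v2 : V5 := ⟨{0,3}, rfl⟩
def v3 : V5 := ⟨{0,4}, rfl⟩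
def v4 : V5 := ⟨{1,2}, rfl⟩
def v5 : V5 := ⟨{1,3}, rfl⟩
def v6 : V5 := ⟨{1,4}, rfl⟩
def v7 : V5 := ⟨{2,3}, rfl⟩
def v8 : V5 := ⟨{2,4}, rfl⟩
def v9 : V5 := ⟨{3,4}, rfl⟩

set_option maxRecDepth 4000 in
lemma E5_eq : E5 = {s(v0,v7), s(v0,v8), s(v0,v9), s(v1,v5), s(v1,v6), s(v1,v9),
    s(v2,v4), s(v2,v6), s(v2,v8), s(v3,v4), s(v3,v5), s(v3,v7), s(v4,v9), s(v5,v8),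
    s(v6,v7)} := by decide

set_option maxRecDepth 4000 in
lemma E5card : E5.card = 15 := by decide

set_option maxRecDepth 4000 in
lemma cover4 : ∀ e ∈ E5, 4 ≤ (Finset.univ.filter
    (fun i : Fin 5 => (∃ a ∈ e, i ∈ a.1) ∧ (∃ b ∈ e, i ∉ b.1))).card := by decide

lemma cross_pair (f : V5 → Bool) (u v : V5) :
    ((∃ a ∈ s(u,v), f a = true) ∧ (∃ b ∈ s(u,v), f b = false)) ↔ f u ≠ f v := by
  simp only [Sym2.mem_iff]
  constructor
  · rintro ⟨⟨a, (rfl | rfl), ha⟩, ⟨b, (rfl | rfl), hb⟩⟩ <;> simp_all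
  · intro h
    cases hu : f u <;> cases hv : f v <;> simp_all

set_option maxRecDepth 4000 in
lemma card_filter_E5 (q : Sym2 V5 → Prop) [DecidablePred q] :
    (E5.filter q).card =
      (if q s(v0,v7) then 1 else 0) + ((if q s(v0,v8) then 1 else 0) +
      ((if q s(v0,v9) then 1 else 0) + ((if q s(v1,v5) then 1 else 0) +
      ((if q s(v1,v6) then 1 else 0) + ((if q s(v1,v9) then 1 else 0) +
      ((if q s(v2,v4) then 1 else 0) + ((if q s(v2,v6) then 1 else 0) +
      ((if q s(v2,v8) then 1 else 0) + ((if q s(v3,v4) then 1 else 0) +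
      ((if q s(v3,v5) then 1 else 0) + ((if q s(v3,v7) then 1 else 0) +
      ((if q s(v4,v9) then 1 else 0) + ((if q s(v5,v8) then 1 else 0) +
      (if q s(v6,v7) then 1 else 0)))))))))))))) := by
  rw [Finset.card_filter, E5_eq]
  rw [Finset.sum_insert (by decide), Finset.sum_insert (by decide),
    Finset.sum_insert (by decide), Finset.sum_insert (by decide),
    Finset.sum_insert (by decide), Finset.sum_insert (by decide),
    Finset.sum_insert (by decide), Finset.sum_insert (by decide),
    Finset.sum_insert (by decide), Finset.sum_insert (by decide),
    Finset.sum_insert (by decide), Finset.sum_insert (by decide),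
    Finset.sum_insert (by decide), Finset.sum_insert (by decide),
    Finset.sum_singleton]

set_option maxRecDepth 4000 in
lemma maxcutB (f : V5 → Bool) :
    (E5.filter (fun e => (∃ a ∈ e, f a = true) ∧ (∃ b ∈ e, f b = false))).card ≤ 12 := by
  rw [card_filter_E5]
  simp only [cross_pair]
  generalize f v0 = b0
  generalize f v1 = b1
  generalize f v2 = b2
  generalize f v3 = b3
  generalize f v4 = b4
  generalize f v5 = b5
  generalize f v6 = b6
  generalize f v7 = b7
  generalize f v8 = b8
  generalize f v9 = b9
  revert b0 b1 b2 b3 b4 b5 b6 b7 b8 b9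
  decide

lemma cross_iff {α : Type*} (W : Set α) (e : Sym2 α) :
    (∃ a b, e = s(a, b) ∧ a ∈ W ∧ b ∉ W) ↔
      ((∃ a ∈ e, a ∈ W) ∧ (∃ b ∈ e, b ∉ W)) := by
  refine Sym2.inductionOn e (fun x y => ?_)
  constructor
  · rintro ⟨a, b, h, ha, hb⟩
    rw [Sym2.eq_iff] at h
    rcases h with ⟨rfl, rfl⟩ | ⟨rfl, rfl⟩
    · exact ⟨⟨x, by simp, ha⟩, ⟨y, by simp, hb⟩⟩
    · exact ⟨⟨y, by simp, ha⟩, ⟨x, by simp, hb⟩⟩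
  · rintro ⟨⟨a, ha, haW⟩, ⟨b, hb, hbW⟩⟩
    rw [Sym2.mem_iff] at ha hb
    rcases ha with rfl | rfl <;> rcases hb with rfl | rfl
    · exact absurd haW hbW
    · exact ⟨a, b, rfl, haW, hbW⟩
    · exact ⟨a, b, Sym2.eq_swap.symm, haW, hbW⟩
    · exact absurd haW hbW

attribute [local instance] Classical.propDecidable

/-- The Kneser graph `K(n,k)` on `k`-subsets of `[n]`, with disjointness edges. -/
def kneser (n k : ℕ) : SimpleGraph {s : Finset (Fin n) // s.card = k} :=
  SimpleGraph.fromRel (fun s t => Disjoint s.1 t.1)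

lemma hasCover54 : HasCover Gc 5 4 := by
  refine ⟨fun i => {e | e ∈ Gc.edgeSet ∧ ∃ a b, e = s(a, b) ∧
      a ∈ {v : V5 | (i : Fin 5) ∈ v.1} ∧ b ∉ {v : V5 | (i : Fin 5) ∈ v.1}},
    fun i => ⟨_, rfl⟩, ?_⟩
  intro e he
  have h4 := cover4 e ((E5_mem e).2 he)
  refine le_trans h4 (le_of_eq ?_)
  have hiff : ∀ i : Fin 5, ((∃ a ∈ e, i ∈ a.1) ∧ (∃ b ∈ e, i ∉ b.1)) ↔
      e ∈ {e | e ∈ Gc.edgeSet ∧ ∃ a b, e = s(a, b) ∧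
        a ∈ {v : V5 | (i : Fin 5) ∈ v.1} ∧ b ∉ {v : V5 | (i : Fin 5) ∈ v.1}} := by
    intro i
    have h2 := cross_iff {v : V5 | (i : Fin 5) ∈ v.1} e
    simp only [Set.mem_setOf_eq] at h2 ⊢
    rw [h2]
    tauto
  rw [Finset.card_filter, Finset.card_filter]
  exact Finset.sum_congr rfl (fun i _ => by simp only [hiff i]; congr)

lemma count_bound {n k : ℕ} (h : HasCover Gc n k) : 15 * k ≤ 12 * n := by
  obtain ⟨X, hcut, hcov⟩ := h
  have key : ∀ i, (E5.filter (fun e => e ∈ X i)).card ≤ 12 := by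
    intro i
    obtain ⟨W, hW⟩ := hcut i
    have heq : E5.filter (fun e => e ∈ X i) =
        E5.filter (fun e => (∃ a ∈ e, (fun v => decide (v ∈ W)) a = true) ∧
          (∃ b ∈ e, (fun v => decide (v ∈ W)) b = false)) := by
      apply Finset.filter_congr
      intro e he
      rw [hW]
      simp only [Set.mem_setOf_eq, decide_eq_true_eq, decide_eq_false_iff_not]
      rw [cross_iff]
      have hE : e ∈ Gc.edgeSet := (E5_mem e).1 he
      tauto
    rw [heq]
    exact maxcutB _
  have lower : 15 * k ≤ ∑ i : Fin n, (E5.filter (fun e => e ∈ X i)).card := by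
    calc 15 * k = ∑ _e ∈ E5, k := by rw [Finset.sum_const, E5card, smul_eq_mul]
    _ ≤ ∑ e ∈ E5, (Finset.univ.filter fun i => e ∈ X i).card :=
        Finset.sum_le_sum (fun e he => hcov e ((E5_mem e).1 he))
    _ = ∑ e ∈ E5, ∑ i : Fin n, if e ∈ X i then 1 else 0 := by
        refine Finset.sum_congr rfl (fun e _ => ?_)
        rw [Finset.card_filter]
    _ = ∑ i : Fin n, ∑ e ∈ E5, if e ∈ X i then 1 else 0 := Finset.sum_comm
    _ = ∑ i : Fin n, (E5.filter (fun e => e ∈ X i)).card := by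
        refine Finset.sum_congr rfl (fun i _ => ?_)
        rw [Finset.card_filter]
  have upper : ∑ i : Fin n, (E5.filter (fun e => e ∈ X i)).card ≤ 12 * n := by
    calc ∑ i : Fin n, (E5.filter (fun e => e ∈ X i)).card ≤ ∑ _i : Fin n, 12 :=
        Finset.sum_le_sum (fun i _ => key i)
    _ = 12 * n := by simp [mul_comm]
  omega

/-- The fractional cut-covering number of the Petersen graph `K(5,2)` is `5/4`. -/
theorem cutCover_petersen : cutCover (kneser 5 2) = 5 / 4 := by
  have hG : kneser 5 2 = Gc := rfl
  rw [hG]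
  unfold cutCover
  have hmem : (5 / 4 : ℝ) ∈ {q : ℝ | ∃ n k : ℕ, 0 < k ∧ q = n / k ∧ HasCover Gc n k} :=
    ⟨5, 4, by norm_num, by norm_num, hasCover54⟩
  have hlb : ∀ q ∈ {q : ℝ | ∃ n k : ℕ, 0 < k ∧ q = n / k ∧ HasCover Gc n k},
      (5 / 4 : ℝ) ≤ q := by
    rintro q ⟨n, k, hk, rfl, hcov⟩
    have h := count_bound hcov
    rw [div_le_div_iff₀ (by norm_num) (by exact_mod_cast hk)]
    have : (5 : ℝ) * k ≤ 4 * n := by exact_mod_cast (by omega : 5 * k ≤ 4 * n)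
    linarith
  exact le_antisymm (csInf_le ⟨5 / 4, hlb⟩ hmem) (le_csInf ⟨_, hmem⟩ hlb)
end

section
/- For every n ≥ 2 there is no cut-continuous mapping from K_{n+2} to K_n. -/
attribute [local instance] Classical.propDecidable

open Finset

/-- The cut determined by a vertex set `W`. -/
def cutSet {V : Type*} (G : SimpleGraph V) (W : Set V) : Set (Sym2 V) :=
  {e | e ∈ G.edgeSet ∧ ∃ a b, e = s(a, b) ∧ a ∈ W ∧ b ∉ W}

lemma isCut_cutSet {V : Type*} (G : SimpleGraph V) (W : Set V) : IsCut G (cutSet G W) :=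
  ⟨W, rfl⟩

lemma hasCover_of_cutContinuous {V W : Type*} {G : SimpleGraph V} {H : SimpleGraph W}
    {f : G.edgeSet → H.edgeSet} (hf : CutContinuous G H f) {N K : ℕ}
    (h : HasCover H N K) : HasCover G N K := by
  obtain ⟨X, hX, hcov⟩ := h
  refine ⟨fun i => {e | ∃ h : e ∈ G.edgeSet, (f ⟨e, h⟩ : Sym2 W) ∈ X i},
    fun i => hf _ (hX i), ?_⟩
  intro e he
  refine le_trans (hcov (f ⟨e, he⟩) (f ⟨e, he⟩).2) (Finset.card_le_card ?_)
  intro i hi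
  simp only [Finset.mem_filter, Finset.mem_univ, true_and, Set.mem_setOf_eq] at hi ⊢
  exact ⟨he, hi⟩

lemma hasCover_of_family {V : Type*} [Fintype V] (G : SimpleGraph V)
    (T : Finset (Finset V)) (K : ℕ)
    (h : ∀ e ∈ G.edgeSet,
      K ≤ (T.filter fun (W : Finset V) => e ∈ cutSet G (↑W : Set V)).card) :
    HasCover G T.card K := by
  refine ⟨fun i => cutSet G (↑((T.equivFin.symm i : {x // x ∈ T}) : Finset V) : Set V),
    fun i => isCut_cutSet _ _, ?_⟩
  intro e he
  refine le_trans (h e he) (le_of_eq ?_)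
  refine Finset.card_bij' (fun W hW => T.equivFin ⟨W, (Finset.mem_filter.mp hW).1⟩)
    (fun i _ => ((T.equivFin.symm i : {x // x ∈ T}) : Finset V)) ?_ ?_ ?_ ?_
  · intro W hW
    simp only [Finset.mem_filter, Finset.mem_univ, true_and, Equiv.symm_apply_apply]
    exact (Finset.mem_filter.mp hW).2
  · intro i hi
    simp only [Finset.mem_filter, Finset.mem_univ, true_and] at hi ⊢
    exact ⟨(T.equivFin.symm i).2, hi⟩
  · intro W hW; simp
  · intro i hi; simp

lemma count_sep (m h : ℕ) (hh : 1 ≤ h) (a b : Fin m) (hab : a ≠ b) :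
    ((Finset.powersetCard h (univ : Finset (Fin m))).filter
      fun W => a ∈ W ∧ b ∉ W).card = (m - 2).choose (h - 1) := by
  obtain ⟨h', rfl⟩ : ∃ h', h = h' + 1 := ⟨h - 1, by omega⟩
  have hcard : (((univ : Finset (Fin m)).erase a).erase b).card = m - 2 := by
    rw [Finset.card_erase_of_mem (by simp [hab.symm]), Finset.card_erase_of_mem (by simp)]
    simp only [Finset.card_univ, Fintype.card_fin]
    omega
  have : ((Finset.powersetCard (h' + 1) (univ : Finset (Fin m))).filter
      fun W => a ∈ W ∧ b ∉ W).card
      = (Finset.powersetCard h' (((univ : Finset (Fin m)).erase a).erase b)).card := by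
    refine Finset.card_bij' (fun W _ => W.erase a) (fun U _ => insert a U) ?_ ?_ ?_ ?_
    · intro W hW
      simp only [Finset.mem_filter, Finset.mem_powersetCard] at hW
      obtain ⟨⟨-, hWc⟩, ha, hb⟩ := hW
      rw [Finset.mem_powersetCard]
      constructor
      · intro x hx
        rw [Finset.mem_erase] at hx ⊢
        refine ⟨?_, by simp [hx.1]⟩
        rintro rfl; exact hb hx.2
      · rw [Finset.card_erase_of_mem ha, hWc]; omega
    · intro U hU
      rw [Finset.mem_powersetCard] at hU
      obtain ⟨hsub, hUc⟩ := hU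
      have haU : a ∉ U := fun hx => by
        have := hsub hx
        simp at this
      have hbU : b ∉ U := fun hx => by
        have := hsub hx
        simp at this
      simp only [Finset.mem_filter, Finset.mem_powersetCard]
      refine ⟨⟨by intro x _; simp, ?_⟩, by simp, ?_⟩
      · rw [Finset.card_insert_of_notMem haU, hUc]
      · simp only [Finset.mem_insert]
        rintro (h | h)
        · exact (hab h.symm).elim
        · exact hbU h
    · intro W hW
      simp only [Finset.mem_filter] at hW
      exact Finset.insert_erase hW.2.1
    · intro U hU
      rw [Finset.mem_powersetCard] at hU
      have haU : a ∉ U := fun hx => by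
        have := hU.1 hx; simp at this
      exact Finset.erase_insert haU
  rw [this, Finset.card_powersetCard, hcard]
  simp

lemma cutSet_top_mem {m : ℕ} (a b : Fin m) (hab : a ≠ b) (W : Finset (Fin m)) :
    s(a, b) ∈ cutSet (⊤ : SimpleGraph (Fin m)) (↑W : Set (Fin m)) ↔
      (a ∈ W ∧ b ∉ W) ∨ (b ∈ W ∧ a ∉ W) := by
  constructor
  · rintro ⟨-, c, d, hcd, hc, hd⟩
    rw [Sym2.eq_iff] at hcd
    rcases hcd with ⟨rfl, rfl⟩ | ⟨rfl, rfl⟩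
    · left; exact ⟨hc, hd⟩
    · right; exact ⟨hc, hd⟩
  · rintro (⟨ha, hb⟩ | ⟨ha, hb⟩)
    · exact ⟨by simp [hab], a, b, rfl, ha, hb⟩
    · exact ⟨by simp [hab], b, a, Sym2.eq_swap.symm, ha, hb⟩

lemma count_edge (m : ℕ) (hm : 2 ≤ m) (a b : Fin m) (hab : a ≠ b) :
    ((Finset.powersetCard (m / 2) (univ : Finset (Fin m))).filter
      fun (W : Finset (Fin m)) =>
        s(a, b) ∈ cutSet (⊤ : SimpleGraph (Fin m)) (↑W : Set (Fin m))).card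
      = 2 * (m - 2).choose (m / 2 - 1) := by
  have hh : 1 ≤ m / 2 := by omega
  have hfe : (Finset.powersetCard (m / 2) (univ : Finset (Fin m))).filter
      (fun (W : Finset (Fin m)) =>
        s(a, b) ∈ cutSet (⊤ : SimpleGraph (Fin m)) (↑W : Set (Fin m)))
      = (Finset.powersetCard (m / 2) (univ : Finset (Fin m))).filter
        (fun W => (a ∈ W ∧ b ∉ W) ∨ (b ∈ W ∧ a ∉ W)) :=
    Finset.filter_congr (fun W _ => cutSet_top_mem a b hab W)
  rw [hfe, Finset.filter_or, Finset.card_union_of_disjoint, count_sep m _ hh a b hab,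
    count_sep m _ hh b a hab.symm]
  · omega
  · rw [Finset.disjoint_filter]
    rintro W - ⟨ha, hb⟩ ⟨hb', -⟩
    exact hb hb'

lemma hasCover_top (m : ℕ) (hm : 2 ≤ m) :
    HasCover (⊤ : SimpleGraph (Fin m)) (m.choose (m / 2))
      (2 * (m - 2).choose (m / 2 - 1)) := by
  have hT : (Finset.powersetCard (m / 2) (univ : Finset (Fin m))).card = m.choose (m / 2) := by
    rw [Finset.card_powersetCard, Finset.card_univ, Fintype.card_fin]
  rw [← hT]
  apply hasCover_of_family
  intro e he
  induction e using Sym2.ind with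
  | _ a b =>
    have hab : a ≠ b := by simpa using he
    rw [count_edge m hm a b hab]

lemma cut_card_bound {M : ℕ} (W : Set (Fin M)) :
    ((⊤ : SimpleGraph (Fin M)).edgeFinset.filter
      (· ∈ cutSet (⊤ : SimpleGraph (Fin M)) W)).card ≤ M * M / 4 := by
  set Wf : Finset (Fin M) := univ.filter (· ∈ W) with hWf
  have hsub : (⊤ : SimpleGraph (Fin M)).edgeFinset.filter
      (· ∈ cutSet (⊤ : SimpleGraph (Fin M)) W)
      ⊆ (Wf ×ˢ (univ \ Wf)).image fun p => s(p.1, p.2) := by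
    intro e he
    rw [Finset.mem_filter] at he
    obtain ⟨-, a, b, rfl, ha, hb⟩ := he.2
    refine Finset.mem_image.mpr ⟨(a, b), ?_, rfl⟩
    simp [Wf, ha, hb]
  have hle : Wf.card ≤ M := by
    simpa using (Finset.card_le_card (Finset.subset_univ Wf)).trans_eq (by simp)
  calc ((⊤ : SimpleGraph (Fin M)).edgeFinset.filter
        (· ∈ cutSet (⊤ : SimpleGraph (Fin M)) W)).card
      ≤ ((Wf ×ˢ (univ \ Wf)).image fun p => s(p.1, p.2)).card := Finset.card_le_card hsub
    _ ≤ (Wf ×ˢ (univ \ Wf)).card := Finset.card_image_le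
    _ = Wf.card * (M - Wf.card) := by
        rw [Finset.card_product, Finset.card_sdiff_of_subset (Finset.subset_univ _)]
        simp
    _ ≤ M * M / 4 := by
        rw [Nat.le_div_iff_mul_le (by norm_num : (0:ℕ) < 4)]
        obtain ⟨w, hw⟩ : ∃ w, Wf.card = w := ⟨_, rfl⟩
        rw [hw] at hle ⊢
        obtain ⟨d, rfl⟩ := Nat.exists_eq_add_of_le hle
        have hd : w + d - w = d := by omega
        rw [hd]
        zify
        nlinarith [sq_nonneg ((w : ℤ) - d)]

lemma cover_count_bound {M N K : ℕ} (h : HasCover (⊤ : SimpleGraph (Fin M)) N K) :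
    K * M.choose 2 ≤ N * (M * M / 4) := by
  obtain ⟨X, hcut, hcov⟩ := h
  set E := (⊤ : SimpleGraph (Fin M)).edgeFinset with hEdef
  have hE : E.card = M.choose 2 := by
    rw [hEdef, SimpleGraph.card_edgeFinset_top_eq_card_choose_two, Fintype.card_fin]
  have h1 : K * E.card ≤ ∑ e ∈ E, (univ.filter fun i => e ∈ X i).card := by
    calc K * E.card = ∑ _e ∈ E, K := by rw [Finset.sum_const, smul_eq_mul, mul_comm]
      _ ≤ _ := Finset.sum_le_sum fun e he =>
          hcov e (by simpa [hEdef, SimpleGraph.mem_edgeFinset] using he)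
  have h2 : ∑ e ∈ E, (univ.filter fun i => e ∈ X i).card
      = ∑ i : Fin N, (E.filter (· ∈ X i)).card := by
    simp only [Finset.card_filter]
    exact Finset.sum_comm
  have h3 : ∀ i, (E.filter (· ∈ X i)).card ≤ M * M / 4 := by
    intro i
    obtain ⟨W, hW⟩ := hcut i
    have hX : X i = cutSet (⊤ : SimpleGraph (Fin M)) W := hW
    have : (E.filter (· ∈ X i)) = (E.filter (· ∈ cutSet (⊤ : SimpleGraph (Fin M)) W)) :=
      Finset.filter_congr (fun e _ => by rw [hX])
    rw [this]
    exact cut_card_bound W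
  calc K * M.choose 2 = K * E.card := by rw [hE]
    _ ≤ ∑ e ∈ E, (univ.filter fun i => e ∈ X i).card := h1
    _ = ∑ i : Fin N, (E.filter (· ∈ X i)).card := h2
    _ ≤ ∑ _i : Fin N, (M * M / 4) := Finset.sum_le_sum fun i _ => h3 i
    _ = N * (M * M / 4) := by simp [mul_comm]

lemma choose_id (n h : ℕ) (hn : 2 ≤ n) (hh : 1 ≤ h) :
    n.choose h * h * (n - h) = n * (n - 1) * (n - 2).choose (h - 1) := by
  obtain ⟨n', rfl⟩ : ∃ n', n = n' + 2 := ⟨n - 2, by omega⟩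
  obtain ⟨h', rfl⟩ : ∃ h', h = h' + 1 := ⟨h - 1, by omega⟩
  have e1 := Nat.add_one_mul_choose_eq (n' + 1) h'
  have e2 := Nat.choose_mul_succ_eq n' h'
  have hs : n' + 2 - (h' + 1) = n' + 1 - h' := by omega
  have hs2 : n' + 2 - 1 = n' + 1 := by omega
  simp only [Nat.add_sub_cancel, hs, hs2]
  rw [← e1, mul_assoc, ← e2]
  ring

lemma arith_contra (n : ℕ) (hn : 2 ≤ n) :
    n * (n - 1) * ((n + 2) * (n + 2) / 4) < (n + 2) * (n + 1) * (n / 2 * (n - n / 2)) := by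
  rcases Nat.even_or_odd n with ⟨t, rfl⟩ | ⟨t, rfl⟩
  · obtain ⟨s, rfl⟩ : ∃ s, t = s + 1 := ⟨t - 1, by omega⟩
    have e1 : (s + 1) + (s + 1) - 1 = 2 * s + 1 := by omega
    have e2 : ((s + 1) + (s + 1)) / 2 = s + 1 := by omega
    have e3 : ((s + 1) + (s + 1) + 2) * ((s + 1) + (s + 1) + 2) / 4 = (s + 2) * (s + 2) := by
      have h : ((s + 1) + (s + 1) + 2) * ((s + 1) + (s + 1) + 2) = 4 * ((s + 2) * (s + 2)) := by
        ring
      rw [h]; omega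
    rw [e1, e2, e3]
    have e4 : (s + 1) + (s + 1) - (s + 1) = s + 1 := by omega
    rw [e4]
    nlinarith
  · obtain ⟨s, rfl⟩ : ∃ s, t = s + 1 := ⟨t - 1, by omega⟩
    have e1 : 2 * (s + 1) + 1 - 1 = 2 * s + 2 := by omega
    have e2 : (2 * (s + 1) + 1) / 2 = s + 1 := by omega
    have e3 : (2 * (s + 1) + 1 + 2) * (2 * (s + 1) + 1 + 2) / 4 = (s + 2) * (s + 3) := by
      have h : (2 * (s + 1) + 1 + 2) * (2 * (s + 1) + 1 + 2) = 4 * ((s + 2) * (s + 3)) + 1 := by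
        ring
      rw [h]; omega
    rw [e1, e2, e3]
    have e4 : 2 * (s + 1) + 1 - (s + 1) = s + 2 := by omega
    rw [e4]
    nlinarith

/-- There is no cut-continuous mapping from `K_{n+2}` to `K_n`. -/
theorem no_cutContinuous_complete (n : ℕ) (hn : 2 ≤ n) :
    ¬ ∃ f : (⊤ : SimpleGraph (Fin (n + 2))).edgeSet → (⊤ : SimpleGraph (Fin n)).edgeSet,
      CutContinuous (⊤ : SimpleGraph (Fin (n + 2))) (⊤ : SimpleGraph (Fin n)) f := by
  rintro ⟨f, hf⟩
  have hcovH := hasCover_top n hn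
  have hcovG := hasCover_of_cutContinuous hf hcovH
  have hb := cover_count_bound hcovG
  set B := (n - 2).choose (n / 2 - 1) with hBdef
  have hBpos : 0 < B := Nat.choose_pos (by omega)
  have hid := choose_id n (n / 2) hn (by omega)
  have hC2 : 2 * (n + 2).choose 2 = (n + 2) * (n + 1) := by
    have hdvd : 2 ∣ (n + 2) * (n + 1) := by
      rcases Nat.even_mul_succ_self (n + 1) with ⟨k, hk⟩
      refine ⟨k, ?_⟩
      ring_nf
      ring_nf at hk
      omega
    have h1 : n + 2 - 1 = n + 1 := by omega
    rw [Nat.choose_two_right, h1]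
    exact Nat.mul_div_cancel' hdvd
  have key : (n + 2) * (n + 1) * (n / 2 * (n - n / 2))
      ≤ n * (n - 1) * ((n + 2) * (n + 2) / 4) := by
    have h2 : B * ((n + 2) * (n + 1) * (n / 2 * (n - n / 2)))
        ≤ B * (n * (n - 1) * ((n + 2) * (n + 2) / 4)) := by
      calc B * ((n + 2) * (n + 1) * (n / 2 * (n - n / 2)))
          = (2 * B * (n + 2).choose 2) * (n / 2 * (n - n / 2)) := by rw [← hC2]; ring
        _ ≤ (n.choose (n / 2) * ((n + 2) * (n + 2) / 4)) * (n / 2 * (n - n / 2)) :=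
            Nat.mul_le_mul_right _ hb
        _ = (n.choose (n / 2) * (n / 2) * (n - n / 2)) * ((n + 2) * (n + 2) / 4) := by ring
        _ = (n * (n - 1) * B) * ((n + 2) * (n + 2) / 4) := by rw [hid]
        _ = B * (n * (n - 1) * ((n + 2) * (n + 2) / 4)) := by ring
    exact Nat.le_of_mul_le_mul_left h2 hBpos
  exact absurd (arith_contra n hn) (not_lt.mpr key)
end

section
/- For integers 0 < 2k ≤ n, the bipartite density of the Kneser graph satisfies b(K(n,k)) ≥ 2k/n. -/
attribute [local instance] Classical.propDecidable

/-- For `0 < 2k ≤ n`, `b(K(n,k)) ≥ 2k/n`. -/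
theorem bipDensity_kneser (n k : ℕ) (hk : 0 < k) (hkn : 2 * k ≤ n) :
    (2 * k : ℝ) / n ≤ bipDensity (kneser n k) := by
  classical
  set V := {s : Finset (Fin n) // s.card = k} with hV
  set G := kneser n k with hG
  have hadj : ∀ a b : V, G.Adj a b ↔ a ≠ b ∧ Disjoint a.1 b.1 := by
    intro a b
    rw [hG, kneser, SimpleGraph.fromRel_adj]
    constructor
    · rintro ⟨hne, h | h⟩
      exacts [⟨hne, h⟩, ⟨hne, h.symm⟩]
    · rintro ⟨hne, h⟩; exact ⟨hne, Or.inl h⟩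
  -- the cuts
  set X : Fin n → Set (Sym2 V) := fun i =>
    {e | e ∈ G.edgeSet ∧ ∃ a b, e = s(a, b) ∧ a ∈ {s : V | i ∈ s.1} ∧ b ∉ {s : V | i ∈ s.1}} with hX
  have hcut : ∀ i, IsCut G (X i) := fun i => ⟨{s : V | i ∈ s.1}, rfl⟩
  -- each edge is cut exactly 2k times
  have hcount : ∀ e ∈ G.edgeSet,
      (Finset.univ.filter fun i => e ∈ X i).card = 2 * k := by
    intro e he
    induction e using Sym2.ind with
    | _ a b =>
      rw [SimpleGraph.mem_edgeSet, hadj] at he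
      obtain ⟨hne, hdisj⟩ := he
      have hfil : (Finset.univ.filter fun i => s(a,b) ∈ X i) = a.1 ∪ b.1 := by
        ext i
        simp only [Finset.mem_filter, Finset.mem_univ, true_and, Finset.mem_union, hX,
          Set.mem_setOf_eq]
        constructor
        · rintro ⟨-, a', b', heq, ha', hb'⟩
          rw [Sym2.eq_iff] at heq
          rcases heq with ⟨rfl, rfl⟩ | ⟨rfl, rfl⟩
          · exact Or.inl ha'
          · exact Or.inr ha'
        · intro hi
          refine ⟨(SimpleGraph.mem_edgeSet _).mpr ((hadj a b).mpr ⟨hne, hdisj⟩), ?_⟩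
          rcases hi with hi | hi
          · exact ⟨a, b, rfl, hi, Finset.disjoint_left.mp hdisj hi⟩
          · exact ⟨b, a, Sym2.eq_swap, hi, Finset.disjoint_right.mp hdisj hi⟩
      rw [hfil, Finset.card_union_of_disjoint hdisj, a.2, b.2, two_mul]
  -- the size of each cut restricted to edges
  set c : Fin n → ℕ := fun i => (G.edgeFinset.filter fun e => e ∈ X i).card with hc
  have hXc : ∀ i, (X i).ncard = c i := by
    intro i
    have : X i = ↑(G.edgeFinset.filter fun e => e ∈ X i) := by
      ext e
      simp only [Finset.coe_filter, Set.mem_setOf_eq, SimpleGraph.mem_edgeFinset]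
      constructor
      · intro he; exact ⟨he.1, he⟩
      · intro he; exact he.2
    rw [this, Set.ncard_coe_finset]
  -- double counting
  have hsum : ∑ i : Fin n, c i = G.edgeFinset.card * (2 * k) := by
    simp only [hc, Finset.card_filter]
    rw [Finset.sum_comm]
    rw [Finset.sum_congr rfl fun e he => ?_, Finset.sum_const, smul_eq_mul]
    rw [← Finset.card_filter]
    exact hcount e (SimpleGraph.mem_edgeFinset.mp he)
  -- there is a vertex
  have hn : 0 < n := lt_of_lt_of_le (by omega) hkn
  obtain ⟨i, -, hi⟩ := Finset.exists_max_image (Finset.univ : Finset (Fin n)) c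
    ⟨⟨0, hn⟩, Finset.mem_univ _⟩
  have hmax : G.edgeFinset.card * (2 * k) ≤ n * c i := by
    rw [← hsum]
    calc ∑ j : Fin n, c j ≤ Finset.univ.card • c i :=
          Finset.sum_le_card_nsmul _ _ _ fun j hj => hi j hj
      _ = n * c i := by simp [smul_eq_mul]
  -- maxCut bound
  have hbdd : BddAbove { m : ℕ | ∃ Y : Set (Sym2 V), IsCut G Y ∧ m = Y.ncard } := by
    refine ⟨(Set.univ : Set (Sym2 V)).ncard, ?_⟩
    rintro m ⟨Y, -, rfl⟩
    exact Set.ncard_le_ncard (Set.subset_univ Y) Set.finite_univ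
  have hle : c i ≤ maxCut G := by
    apply le_csSup hbdd
    exact ⟨X i, hcut i, (hXc i).symm⟩
  -- an edge exists
  obtain ⟨s, -, hs⟩ := Finset.exists_subset_card_eq (s := (Finset.univ : Finset (Fin n))) (n := 2 * k)
    (by simpa using hkn)
  obtain ⟨a, has, ha⟩ := Finset.exists_subset_card_eq (s := s) (n := k) (by omega)
  have hbcard : (s \ a).card = k := by
    rw [Finset.card_sdiff_of_subset has, hs, ha]; omega
  have hdisj : Disjoint a (s \ a) := Finset.disjoint_sdiff
  have hne : (⟨a, ha⟩ : V) ≠ ⟨s \ a, hbcard⟩ := by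
    intro h
    have : a = s \ a := congrArg Subtype.val h
    have := hdisj.eq_bot_of_le (le_of_eq this)
    simp only [Finset.bot_eq_empty] at this
    rw [this, Finset.card_empty] at ha; omega
  have hedge : s(⟨a, ha⟩, (⟨s \ a, hbcard⟩ : V)) ∈ G.edgeSet :=
    (SimpleGraph.mem_edgeSet _).mpr ((hadj _ _).mpr ⟨hne, hdisj⟩)
  have hEfin : G.edgeSet.Finite := Set.toFinite _
  have hEpos : 0 < G.edgeSet.ncard := (Set.ncard_pos hEfin).mpr ⟨_, hedge⟩
  have hEcard : G.edgeSet.ncard = G.edgeFinset.card := by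
    rw [SimpleGraph.edgeFinset, Set.ncard_eq_toFinset_card']
  -- conclude
  rw [bipDensity, hG] at *
  rw [div_le_div_iff₀ (by exact_mod_cast hn) (by exact_mod_cast hEpos)]
  have key : G.edgeSet.ncard * (2 * k) ≤ n * maxCut G := by
    rw [hEcard]
    calc G.edgeFinset.card * (2 * k) ≤ n * c i := hmax
      _ ≤ n * maxCut G := Nat.mul_le_mul_left n hle
  calc (2 * k : ℝ) * G.edgeSet.ncard = G.edgeSet.ncard * (2 * k) := by ring
    _ ≤ n * maxCut G := by exact_mod_cast key
    _ = (maxCut G : ℝ) * n := by ring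
end

section
/- For integers 0 < 2k ≤ n, x(K(n,k)) ≤ n/(2k), and consequently for every graph G, x(G) ≤ χ_f(G)/2, where χ_f is the fractional chromatic number. -/
attribute [local instance] Classical.propDecidable

/-- The fractional chromatic number, via homomorphisms into Kneser graphs. -/
noncomputable def fracChrom {V : Type*} (G : SimpleGraph V) : ℝ :=
  sInf { q : ℝ | ∃ n k : ℕ, 0 < k ∧ q = n / k ∧ Nonempty (G →g kneser n k) }


lemma hasCover_of_hom {V : Type*} (G : SimpleGraph V) (n k : ℕ)
    (f : G →g kneser n k) : HasCover G n (2 * k) := by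
  classical
  refine ⟨fun i => {e | e ∈ G.edgeSet ∧ ∃ a b, e = s(a, b) ∧ i ∈ (f a).1 ∧ i ∉ (f b).1},
    fun i => ⟨{v | i ∈ (f v).1}, rfl⟩, ?_⟩
  intro e he
  induction e with
  | h u v =>
    have adj : G.Adj u v := he
    have hk := f.map_adj adj
    simp only [kneser, SimpleGraph.fromRel_adj] at hk
    have hdisj : Disjoint (f u).1 (f v).1 := hk.2.elim id fun h => h.symm
    have hcard : ((f u).1 ∪ (f v).1).card = 2 * k := by
      rw [Finset.card_union_of_disjoint hdisj, (f u).2, (f v).2, two_mul]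
    calc 2 * k = ((f u).1 ∪ (f v).1).card := hcard.symm
      _ ≤ _ := by
        apply Finset.card_le_card
        intro i hi
        simp only [Finset.mem_filter, Finset.mem_univ, true_and, Set.mem_setOf_eq]
        rcases Finset.mem_union.mp hi with h | h
        · exact ⟨he, u, v, rfl, h, Finset.disjoint_left.mp hdisj h⟩
        · exact ⟨he, v, u, Sym2.eq_swap, h, Finset.disjoint_right.mp hdisj h⟩

lemma cutCover_le_of_hom {V : Type*} (G : SimpleGraph V) (n k : ℕ) (hk : 0 < k)
    (f : G →g kneser n k) : cutCover G ≤ (n : ℝ) / (2 * k) := by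
  have hmem : (n : ℝ) / (2 * k) ∈
      { q : ℝ | ∃ n k : ℕ, 0 < k ∧ q = n / k ∧ HasCover G n k } :=
    ⟨n, 2 * k, by omega, by push_cast; ring, hasCover_of_hom G n k f⟩
  refine csInf_le ⟨0, ?_⟩ hmem
  rintro q ⟨m, j, hj, rfl, -⟩
  positivity

/-- `x(K(n,k)) ≤ n/(2k)` for `0 < 2k ≤ n`; consequently `x(G) ≤ χ_f(G)/2`. -/
theorem cutCover_kneser_and_fracChrom :
    (∀ n k : ℕ, 0 < k → 2 * k ≤ n → cutCover (kneser n k) ≤ (n : ℝ) / (2 * k)) ∧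
    (∀ (V : Type) (_ : Fintype V) (G : SimpleGraph V), G.edgeSet.Nonempty →
      cutCover G ≤ fracChrom G / 2) := by
  constructor
  · intro n k hk _
    exact cutCover_le_of_hom _ n k hk (SimpleGraph.Hom.id)
  · intro V _ G _
    have hS : { q : ℝ | ∃ n k : ℕ, 0 < k ∧ q = n / k ∧ Nonempty (G →g kneser n k) }.Nonempty := by
      refine ⟨(Fintype.card V : ℝ) / 1, Fintype.card V, 1, one_pos, by norm_num, ⟨?_⟩⟩
      refine ⟨fun v => ⟨{Fintype.equivFin V v}, Finset.card_singleton _⟩, ?_⟩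
      intro u v huv
      simp only [kneser, SimpleGraph.fromRel_adj]
      constructor
      · intro h
        have : ({(Fintype.equivFin V) u} : Finset _) = {(Fintype.equivFin V) v} :=
          congrArg Subtype.val h
        exact huv.ne ((Fintype.equivFin V).injective (Finset.singleton_injective this))
      · left
        simp only [Finset.disjoint_singleton]
        exact fun h => huv.ne ((Fintype.equivFin V).injective h)
    rw [le_div_iff₀ (by norm_num : (0:ℝ) < 2)]
    rw [fracChrom]
    refine le_csInf hS ?_
    rintro q ⟨n, k, hk, rfl, ⟨f⟩⟩
    have := cutCover_le_of_hom G n k hk f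
    rw [show (2:ℝ) * (k:ℝ) = (k:ℝ) * 2 by ring, ← div_div] at this
    linarith
end

section
/- For every ε > 0 and every integer b there is a graph G with χ_q(G) < 2 + ε and χ(G) > b, where χ_q(G) = 2/(2 − x(G)). -/
attribute [local instance] Classical.propDecidable

set_option linter.unusedSectionVars false
namespace KneserOTL

/-- Alternating label list: expected sign `s` (±1), previous abs bound `m`. -/
def AltL : ℤ → ℕ → List ℤ → Prop
  | _, _, [] => True
  | s, m, h :: tl => 0 < s * h ∧ m < h.natAbs ∧ AltL (-s) h.natAbs tl

noncomputable def ind (p : Prop) : ℕ := if p then 1 else 0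

lemma ind_congr {p q : Prop} (h : p ↔ q) : ind p = ind q := by
  unfold ind; rw [if_congr h rfl rfl]

lemma ind_neg {p : Prop} (h : ¬ p) : ind p = 0 := by
  unfold ind; rw [if_neg h]

noncomputable def cnt (s : ℤ) (m : ℕ) (L : List ℤ) : ℕ :=
  ∑ i ∈ Finset.range L.length, ind (AltL s m (L.eraseIdx i))

lemma AltL_nil (s m) : AltL s m [] := trivial

lemma AltL_cons (s m h tl) : AltL s m (h :: tl) ↔ (0 < s * h ∧ m < h.natAbs ∧ AltL (-s) h.natAbs tl) := Iff.rfl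

/-- bound switch: if head of `tl` has abs > both bounds (or is blocked by sign), bounds don't matter. -/
lemma AltL_bound_iff (s : ℤ) (m m' : ℕ) (tl : List ℤ)
    (h : ∀ t₁ ∈ tl.head?, (m < t₁.natAbs ↔ m' < t₁.natAbs) ∨ ¬ (0 < s * t₁)) :
    AltL s m tl ↔ AltL s m' tl := by
  cases tl with
  | nil => simp [AltL]
  | cons t₁ rest =>
    have := h t₁ (by simp)
    rw [AltL_cons, AltL_cons]
    rcases this with h1 | h1
    · rw [h1]
    · constructor <;> rintro ⟨hs, -, -⟩ <;> exact absurd hs h1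

lemma cnt_cons (s : ℤ) (m : ℕ) (h : ℤ) (tl : List ℤ) :
    cnt s m (h :: tl) = ind (AltL s m tl) + ∑ i ∈ Finset.range tl.length, ind (AltL s m (h :: tl.eraseIdx i)) := by
  unfold cnt
  rw [List.length_cons, Finset.sum_range_succ']
  rw [add_comm]
  congr 1

theorem cnt_parity (L : List ℤ) : ∀ (s : ℤ) (m : ℕ), (s = 1 ∨ s = -1) →
    L.Pairwise (fun a b => a.natAbs ≤ b.natAbs) →
    (∀ a ∈ L, ∀ b ∈ L, a.natAbs = b.natAbs → a = b) →
    (∀ a ∈ L, m < a.natAbs) →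
    cnt s m L % 2 = (ind (AltL s m L) + ind (AltL (-s) m L)) % 2 := by
  induction L with
  | nil =>
    intro s m hs hsort hnc hb
    simp [cnt, ind, AltL]
  | cons h tl IH =>
    intro s m hs hsort hnc hb
    have hmh : m < h.natAbs := hb h (by simp)
    have hh0 : h ≠ 0 := by
      intro h0; rw [h0] at hmh; simp at hmh
    have hsh : (0 < s * h ∧ ¬ (0 < -s * h)) ∨ (¬ (0 < s * h) ∧ 0 < -s * h) := by
      rcases hs with rfl | rfl
      · rcases lt_trichotomy h 0 with h1 | h1 | h1
        · right; constructor <;> simp <;> omega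
        · exact absurd h1 hh0
        · left; constructor <;> simp <;> omega
      · rcases lt_trichotomy h 0 with h1 | h1 | h1
        · left; constructor <;> simp <;> omega
        · exact absurd h1 hh0
        · right; constructor <;> simp <;> omega
    have hsorttl : tl.Pairwise (fun a b => a.natAbs ≤ b.natAbs) := hsort.of_cons
    have hhead : ∀ a ∈ tl, h.natAbs ≤ a.natAbs := fun a ha => (List.pairwise_cons.1 hsort).1 a ha
    have hnctl : ∀ a ∈ tl, ∀ b ∈ tl, a.natAbs = b.natAbs → a = b :=
      fun a ha b hb' => hnc a (by simp [ha]) b (by simp [hb'])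
    rw [cnt_cons]
    rcases hsh with ⟨hpos, hneg⟩ | ⟨hneg, hpos⟩
    · -- sign matches: inner sum = cnt (-s) |h| tl
      have hinner : ∀ i ∈ Finset.range tl.length,
          ind (AltL s m (h :: tl.eraseIdx i)) = ind (AltL (-s) h.natAbs (tl.eraseIdx i)) := by
        intro i _
        unfold ind
        rw [AltL_cons]
        congr 1
        simp only [eq_iff_iff]
        constructor
        · rintro ⟨-, -, h3⟩; exact h3
        · intro h3; exact ⟨hpos, hmh, h3⟩
      rw [Finset.sum_congr rfl hinner]
      have hsum : ∑ i ∈ Finset.range tl.length, ind (AltL (-s) h.natAbs (tl.eraseIdx i)) = cnt (-s) h.natAbs tl := rfl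
      rw [hsum]
      -- case on tie
      by_cases htie : ∃ t₁, tl.head? = some t₁ ∧ t₁.natAbs = h.natAbs
      · obtain ⟨t₁, ht1, habs⟩ := htie
        obtain ⟨rest, hrest⟩ : ∃ rest, tl = t₁ :: rest := by
          cases tl with
          | nil => simp at ht1
          | cons a r => simp at ht1; exact ⟨r, by rw [ht1]⟩
        have ht1h : t₁ = h := hnc t₁ (by simp [hrest]) h (by simp) habs
        rw [ht1h] at hrest
        subst hrest
        -- cnt (-s) |h| (h :: rest): head blocked by sign
        have e1 : cnt (-s) h.natAbs (h :: rest) = ind (AltL (-s) h.natAbs rest) +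
            ∑ i ∈ Finset.range rest.length, ind (AltL (-s) h.natAbs (h :: rest.eraseIdx i)) := cnt_cons _ _ _ _
        have e2 : ∀ i ∈ Finset.range rest.length, ind (AltL (-s) h.natAbs (h :: rest.eraseIdx i)) = 0 := by
          intro i _
          unfold ind
          rw [if_neg]
          rw [AltL_cons]
          rintro ⟨hc, -, -⟩; exact hneg hc
        rw [e1, Finset.sum_congr rfl e2, Finset.sum_const_zero, add_zero]
        have e3 : AltL s m (h :: rest) ↔ AltL (-s) h.natAbs rest := by
          rw [AltL_cons]
          constructor
          · rintro ⟨-, -, h3⟩; exact h3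
          · intro h3; exact ⟨hpos, hmh, h3⟩
        have e4 : ¬ AltL s m (h :: h :: rest) := by
          rw [AltL_cons, AltL_cons]
          rintro ⟨-, -, hc, -⟩; exact hneg hc
        have e5 : ¬ AltL (-s) m (h :: h :: rest) := by
          rw [AltL_cons]
          rintro ⟨hc, -⟩; exact hneg hc
        rw [ind_neg e4, ind_neg e5, ind_congr e3]
        omega
      · -- no tie: strict bound on all of tl
        have hstrict : ∀ a ∈ tl, h.natAbs < a.natAbs := by
          intro a ha
          rcases eq_or_ne tl [] with rfl | hne
          · simp at ha
          · obtain ⟨t₁, rest, rfl⟩ := List.exists_cons_of_ne_nil hne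
            have ht1 : h.natAbs ≤ t₁.natAbs := hhead t₁ (by simp)
            have ht1' : t₁.natAbs ≠ h.natAbs := by
              intro hx; exact htie ⟨t₁, by simp, hx⟩
            rcases List.mem_cons.1 ha with rfl | ha'
            · omega
            · have := (List.pairwise_cons.1 hsorttl).1 a ha'
              omega
        have IH' := IH (-s) h.natAbs (by rcases hs with rfl | rfl <;> simp) hsorttl hnctl hstrict
        have e3 : AltL s m (h :: tl) ↔ AltL (-s) h.natAbs tl := by
          rw [AltL_cons]
          exact ⟨fun ⟨_, _, h3⟩ => h3, fun h3 => ⟨hpos, hmh, h3⟩⟩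
        have e5 : ¬ AltL (-s) m (h :: tl) := by
          rw [AltL_cons]; rintro ⟨hc, -⟩; exact hneg hc
        have e6 : AltL s m tl ↔ AltL s h.natAbs tl := by
          apply AltL_bound_iff
          intro t₁ ht1
          left
          have ht1m : t₁ ∈ tl := by
            cases tl with
            | nil => simp at ht1
            | cons a r => simp at ht1; subst ht1; simp
          have := hstrict t₁ ht1m
          have := hb t₁ (by simp [ht1m])
          omega
        -- now pure arithmetic mod 2
        rw [neg_neg] at IH'
        rw [ind_congr e3, ind_neg e5, ind_congr e6]
        omega
    · -- sign blocked: inner sum = 0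
      have hinner : ∀ i ∈ Finset.range tl.length, ind (AltL s m (h :: tl.eraseIdx i)) = 0 := by
        intro i _
        unfold ind
        rw [if_neg]
        rw [AltL_cons]
        rintro ⟨hc, -⟩; exact hneg hc
      rw [Finset.sum_congr rfl hinner, Finset.sum_const_zero, add_zero]
      have e4 : ¬ AltL s m (h :: tl) := by
        rw [AltL_cons]; rintro ⟨hc, -⟩; exact hneg hc
      have e5 : AltL (-s) m (h :: tl) ↔ AltL s h.natAbs tl := by
        rw [AltL_cons, neg_neg]
        exact ⟨fun ⟨_, _, h3⟩ => h3, fun h3 => ⟨hpos, hmh, h3⟩⟩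
      have e6 : AltL s m tl ↔ AltL s h.natAbs tl := by
        apply AltL_bound_iff
        intro t₁ ht1
        have ht1m : t₁ ∈ tl := by
          cases tl with
          | nil => simp at ht1
          | cons a r => simp at ht1; subst ht1; simp
        by_cases habs : t₁.natAbs = h.natAbs
        · right
          have : t₁ = h := hnc t₁ (by simp [ht1m]) h (by simp) habs
          rw [this]; exact hneg
        · left
          have := hhead t₁ ht1m
          have := hb t₁ (by simp [ht1m])
          omega
      rw [ind_neg e4, ind_congr e5, ind_congr e6]
      omega

variable {α : Type*} [DecidableEq α] [Fintype α]

abbrev SV (α : Type*) := Finset α × Finset α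

def supp (x : SV α) : Finset α := x.1 ∪ x.2

def sle (x y : SV α) : Prop := x.1 ⊆ y.1 ∧ x.2 ⊆ y.2

lemma sle_refl (x : SV α) : sle x x := ⟨subset_rfl, subset_rfl⟩

lemma sle_trans {x y z : SV α} (h1 : sle x y) (h2 : sle y z) : sle x z :=
  ⟨h1.1.trans h2.1, h1.2.trans h2.2⟩

lemma supp_mono {x y : SV α} (h : sle x y) : supp x ⊆ supp y :=
  Finset.union_subset_union h.1 h.2

def SVvalid (U : Finset α) (x : SV α) : Prop :=
  Disjoint x.1 x.2 ∧ supp x ⊆ U ∧ (supp x).Nonempty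

def ChainIn (U : Finset α) (σ : Finset (SV α)) : Prop :=
  (∀ x ∈ σ, SVvalid U x) ∧ ∀ x ∈ σ, ∀ y ∈ σ, sle x y ∨ sle y x

def sz (x : SV α) : ℕ := (supp x).card

lemma eq_of_sle_of_card {x y : SV α} (hy : Disjoint y.1 y.2) (h : sle x y)
    (hc : sz y ≤ sz x) : x = y := by
  have hsub : supp x ⊆ supp y := supp_mono h
  have hss : supp x = supp y := Finset.eq_of_subset_of_card_le hsub hc
  have h1 : y.1 ⊆ x.1 := by
    intro a ha
    have : a ∈ supp x := by rw [hss]; exact Finset.mem_union_left _ ha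
    rcases Finset.mem_union.1 this with h' | h'
    · exact h'
    · exact absurd ha (Finset.disjoint_right.1 hy (h.2 h'))
  have h2 : y.2 ⊆ x.2 := by
    intro a ha
    have : a ∈ supp x := by rw [hss]; exact Finset.mem_union_right _ ha
    rcases Finset.mem_union.1 this with h' | h'
    · exact absurd ha (Finset.disjoint_left.1 hy (h.1 h'))
    · exact h'
  exact Prod.ext (subset_antisymm h.1 h1) (subset_antisymm h.2 h2)

lemma chain_eq_of_sz {U : Finset α} {σ : Finset (SV α)} (hσ : ChainIn U σ)
    {x y : SV α} (hx : x ∈ σ) (hy : y ∈ σ) (h : sz x = sz y) : x = y := by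
  rcases hσ.2 x hx y hy with h' | h'
  · exact eq_of_sle_of_card (hσ.1 y hy).1 h' h.ge
  · exact (eq_of_sle_of_card (hσ.1 x hx).1 h' h.le).symm

lemma chain_sle_of_sz_le {U : Finset α} {σ : Finset (SV α)} (hσ : ChainIn U σ)
    {x y : SV α} (hx : x ∈ σ) (hy : y ∈ σ) (h : sz x ≤ sz y) : sle x y := by
  rcases hσ.2 x hx y hy with h' | h'
  · exact h'
  · rw [eq_of_sle_of_card (hσ.1 x hx).1 h' h]
    exact sle_refl _

lemma sz_mem_Icc {U : Finset α} {σ : Finset (SV α)} (hσ : ChainIn U σ)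
    {x : SV α} (hx : x ∈ σ) : sz x ∈ Finset.Icc 1 U.card := by
  obtain ⟨hd, hsub, hne⟩ := hσ.1 x hx
  rw [Finset.mem_Icc]
  exact ⟨Finset.card_pos.2 hne, Finset.card_le_card hsub⟩

/-- the sizes of a chain form a set of the same cardinality -/
lemma sz_image_card {U : Finset α} {σ : Finset (SV α)} (hσ : ChainIn U σ) :
    (σ.image sz).card = σ.card := by
  apply Finset.card_image_of_injOn
  intro x hx y hy h
  exact chain_eq_of_sz hσ hx hy h

lemma full_chain_sizes {U : Finset α} {σ : Finset (SV α)} (hσ : ChainIn U σ)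
    (hcard : σ.card = U.card) : σ.image sz = Finset.Icc 1 U.card := by
  apply Finset.eq_of_subset_of_card_le
  · intro s hs
    obtain ⟨x, hx, rfl⟩ := Finset.mem_image.1 hs
    exact sz_mem_Icc hσ hx
  · rw [sz_image_card hσ, hcard, Nat.card_Icc]; omega

lemma full_chain_top {U : Finset α} {σ : Finset (SV α)} (hσ : ChainIn U σ)
    (hcard : σ.card = U.card) (hU : 0 < U.card) :
    ∃ top ∈ σ, supp top = U ∧ ∀ x ∈ σ, sle x top := by
  have : U.card ∈ σ.image sz := by
    rw [full_chain_sizes hσ hcard, Finset.mem_Icc]; omega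
  obtain ⟨top, htop, hsz⟩ := Finset.mem_image.1 this
  have hsupp : supp top = U :=
    Finset.eq_of_subset_of_card_le (hσ.1 top htop).2.1 (by unfold sz at hsz; rw [hsz])
  refine ⟨top, htop, hsupp, fun x hx => ?_⟩
  apply chain_sle_of_sz_le hσ hx htop
  rw [hsz]
  exact (Finset.mem_Icc.1 (sz_mem_Icc hσ hx)).2


def FullChain (U : Finset α) (σ : Finset (SV α)) : Prop := ChainIn U σ ∧ σ.card = U.card

def Hem (p : α) (σ : Finset (SV α)) : Prop := ∀ x ∈ σ, p ∉ x.2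

def Equa (p : α) (γ : Finset (SV α)) : Prop := ∀ x ∈ γ, p ∉ supp x

theorem ext_count (p : α) (U : Finset α) (hp : p ∈ U) (γ : Finset (SV α))
    (hγ : ChainIn U γ) (hhem : Hem p γ) (hcard : γ.card + 1 = U.card) :
    (Finset.univ.filter fun σ => FullChain U σ ∧ Hem p σ ∧ γ ⊆ σ).card
      = if Equa p γ then 1 else 2 := by
  classical
  set r := U.card with hr
  have hr1 : 1 ≤ r := Finset.card_pos.2 ⟨p, hp⟩
  -- the set of possible new elements
  set ZS : Finset (SV α) := Finset.univ.filter
      (fun z => z ∉ γ ∧ FullChain U (insert z γ) ∧ Hem p (insert z γ)) with hZS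
  -- step 1 : the σ's are exactly insert z γ for z ∈ ZS
  have himg : (Finset.univ.filter fun σ => FullChain U σ ∧ Hem p σ ∧ γ ⊆ σ)
      = ZS.image (fun z => insert z γ) := by
    ext σ
    simp only [Finset.mem_filter, Finset.mem_univ, true_and, Finset.mem_image, hZS]
    constructor
    · rintro ⟨hfull, hhem', hsub⟩
      have hsd : (σ \ γ).card = 1 := by
        rw [Finset.card_sdiff_of_subset hsub, hfull.2]
        omega
      obtain ⟨z, hz⟩ := Finset.card_eq_one.1 hsd
      have hzmem : z ∈ σ ∧ z ∉ γ := by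
        have : z ∈ σ \ γ := by rw [hz]; exact Finset.mem_singleton_self z
        exact ⟨(Finset.mem_sdiff.1 this).1, (Finset.mem_sdiff.1 this).2⟩
      have hσ : σ = insert z γ := by
        have h1 : γ ∪ (σ \ γ) = σ := Finset.union_sdiff_of_subset hsub
        rw [hz] at h1
        rw [← h1]
        ext a
        simp [Finset.mem_insert, Finset.mem_union, or_comm]
      refine ⟨z, ⟨hzmem.2, ?_, ?_⟩, hσ.symm⟩
      · rw [← hσ]; exact hfull
      · rw [← hσ]; exact hhem'
    · rintro ⟨z, ⟨hznot, hfull, hhem'⟩, rfl⟩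
      exact ⟨hfull, hhem', Finset.subset_insert _ _⟩
  have hinj : Set.InjOn (fun z => insert z γ) ZS := by
    intro z hz z' hz' h
    simp only [hZS, Finset.mem_coe, Finset.mem_filter] at hz hz'
    have h2 : insert z γ = insert z' γ := h
    have : z' ∈ insert z γ := by rw [h2]; exact Finset.mem_insert_self _ _
    rcases Finset.mem_insert.1 this with h' | h'
    · exact h'.symm
    · exact absurd h' hz'.2.1
  rw [himg, Finset.card_image_of_injOn hinj]
  -- step 2: sizes and the missing size d
  set S : Finset ℕ := γ.image sz with hS
  have hScard : S.card = r - 1 := by rw [hS, sz_image_card hγ]; omega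
  have hSsub : S ⊆ Finset.Icc 1 r := by
    intro s hs
    obtain ⟨x, hx, rfl⟩ := Finset.mem_image.1 hs
    exact sz_mem_Icc hγ hx
  have hmiss : (Finset.Icc 1 r \ S).card = 1 := by
    rw [Finset.card_sdiff_of_subset hSsub, Nat.card_Icc, hScard]
    omega
  obtain ⟨d, hd⟩ := Finset.card_eq_one.1 hmiss
  have hdIcc : d ∈ Finset.Icc 1 r := (Finset.mem_sdiff.1 (hd ▸ Finset.mem_singleton_self d)).1
  have hdS : d ∉ S := (Finset.mem_sdiff.1 (hd ▸ Finset.mem_singleton_self d)).2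
  have hd1r : 1 ≤ d ∧ d ≤ r := Finset.mem_Icc.1 hdIcc
  have hmem_S : ∀ e, 1 ≤ e → e ≤ r → e ≠ d → e ∈ S := by
    intro e he1 he2 hne
    by_contra hx
    have : e ∈ Finset.Icc 1 r \ S := Finset.mem_sdiff.2 ⟨Finset.mem_Icc.2 ⟨he1, he2⟩, hx⟩
    rw [hd] at this
    exact hne (Finset.mem_singleton.1 this)
  -- every z ∈ ZS has size d
  have hszZ : ∀ z ∈ ZS, sz z = d := by
    intro z hz
    simp only [hZS, Finset.mem_filter, Finset.mem_univ, true_and] at hz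
    obtain ⟨hznot, ⟨hch, hcd⟩, hhem'⟩ := hz
    have hzval := hch.1 z (Finset.mem_insert_self _ _)
    have h1 : sz z ∈ Finset.Icc 1 r := sz_mem_Icc hch (Finset.mem_insert_self _ _)
    by_contra hne
    have : sz z ∈ S := by
      rcases Finset.mem_Icc.1 h1 with ⟨a, b⟩
      exact hmem_S _ a b hne
    obtain ⟨x, hx, hxz⟩ := Finset.mem_image.1 this
    have : x = z := chain_eq_of_sz hch (Finset.mem_insert_of_mem hx) (Finset.mem_insert_self _ _) hxz
    rw [this] at hx
    exact hznot hx
  -- the lower element xm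
  obtain ⟨xm, hxmcase⟩ : ∃ xm : SV α, (d = 1 ∧ xm = ((∅ : Finset α), (∅ : Finset α))) ∨
      (2 ≤ d ∧ xm ∈ γ ∧ sz xm = d - 1) := by
    by_cases hd1 : d = 1
    · exact ⟨(∅, ∅), Or.inl ⟨hd1, rfl⟩⟩
    · have : d - 1 ∈ S := hmem_S (d-1) (by omega) (by omega) (by omega)
      obtain ⟨x, hx, hxd⟩ := Finset.mem_image.1 this
      exact ⟨x, Or.inr ⟨by omega, hx, hxd⟩⟩
  have hxm_supp : (supp xm).card = d - 1 := by
    rcases hxmcase with ⟨hd1, rfl⟩ | ⟨hd2, hm, hsz⟩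
    · simp [supp, hd1]
    · exact hsz
  have hxm_disj : Disjoint xm.1 xm.2 := by
    rcases hxmcase with ⟨hd1, rfl⟩ | ⟨hd2, hm, hsz⟩
    · simp
    · exact (hγ.1 xm hm).1
  have hxm_sub : supp xm ⊆ U := by
    rcases hxmcase with ⟨hd1, rfl⟩ | ⟨hd2, hm, hsz⟩
    · simp [supp]
    · exact (hγ.1 xm hm).2.1
  have hxm_p2 : p ∉ xm.2 := by
    rcases hxmcase with ⟨hd1, rfl⟩ | ⟨hd2, hm, hsz⟩
    · simp
    · exact hhem xm hm
  have hxm_le : ∀ y ∈ γ, sz y < d → sle y xm := by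
    intro y hy hylt
    rcases hxmcase with ⟨hd1, rfl⟩ | ⟨hd2, hm, hszm⟩
    · exfalso
      have h0 := Finset.card_pos.2 (hγ.1 y hy).2.2
      have : sz y = (supp y).card := rfl
      omega
    · exact chain_sle_of_sz_le hγ hy hm (by omega)
  -- xm ⪯ z for z ∈ ZS
  have hxm_le_z : ∀ z ∈ ZS, sle xm z := by
    intro z hz
    have hzd := hszZ z hz
    simp only [hZS, Finset.mem_filter, Finset.mem_univ, true_and] at hz
    rcases hxmcase with ⟨hd1, rfl⟩ | ⟨hd2, hm, hszm⟩
    · exact ⟨Finset.empty_subset _, Finset.empty_subset _⟩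
    · exact chain_sle_of_sz_le hz.2.1.1 (Finset.mem_insert_of_mem hm)
        (Finset.mem_insert_self _ _) (by omega)
  -- main case split on whether the missing size is the top size
  by_cases hdr : d = r
  · -- top case
    have hqcard : (U \ supp xm).card = 1 := by
      rw [Finset.card_sdiff_of_subset hxm_sub, hxm_supp]
      omega
    obtain ⟨q, hq⟩ := Finset.card_eq_one.1 hqcard
    have hqU : q ∈ U := (Finset.mem_sdiff.1 (hq ▸ Finset.mem_singleton_self q)).1
    have hqxm : q ∉ supp xm := (Finset.mem_sdiff.1 (hq ▸ Finset.mem_singleton_self q)).2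
    have hUq : ∀ a ∈ U, a ∉ supp xm → a = q := by
      intro a ha hna
      have : a ∈ U \ supp xm := Finset.mem_sdiff.2 ⟨ha, hna⟩
      rw [hq] at this
      exact Finset.mem_singleton.1 this
    set z1 : SV α := (insert q xm.1, xm.2) with hz1
    set z2 : SV α := (xm.1, insert q xm.2) with hz2
    have hsuppz1 : supp z1 = insert q (supp xm) := by
      simp only [hz1, supp]
      ext a
      simp [Finset.mem_union, Finset.mem_insert]
      try tauto
    have hsuppz2 : supp z2 = insert q (supp xm) := by
      simp only [hz2, supp]
      ext a
      simp [Finset.mem_union, Finset.mem_insert]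
      try tauto
    have hszz1 : sz z1 = d := by
      unfold sz
      rw [hsuppz1, Finset.card_insert_of_notMem hqxm, hxm_supp]
      omega
    have hszz2 : sz z2 = d := by
      unfold sz
      rw [hsuppz2, Finset.card_insert_of_notMem hqxm, hxm_supp]
      omega
    have hnotin : ∀ z : SV α, sz z = d → z ∉ γ := by
      intro z hzd hzin
      exact hdS (Finset.mem_image.2 ⟨z, hzin, hzd⟩)
    have hall : ∀ y ∈ γ, sle y xm := by
      intro y hy
      apply hxm_le y hy
      have h1 := Finset.mem_Icc.1 (sz_mem_Icc hγ hy)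
      have h2 : sz y ∈ S := Finset.mem_image.2 ⟨y, hy, rfl⟩
      have : sz y ≠ d := fun h => hdS (h ▸ h2)
      omega
    -- generic membership criterion in the top case
    have hmem_z : ∀ z : SV α, sz z = d → sle xm z → Disjoint z.1 z.2 → supp z ⊆ U →
        p ∉ z.2 → z ∈ ZS := by
      intro z hzd hlez hdisj hsub hp2
      simp only [hZS, Finset.mem_filter, Finset.mem_univ, true_and]
      have hzγ := hnotin z hzd
      refine ⟨hzγ, ⟨⟨?_, ?_⟩, ?_⟩, ?_⟩
      · intro x hx
        rcases Finset.mem_insert.1 hx with rfl | hx'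
        · refine ⟨hdisj, hsub, ?_⟩
          rw [← Finset.card_pos]
          have : sz x = (supp x).card := rfl
          omega
        · exact hγ.1 x hx'
      · intro x hx y hy
        rcases Finset.mem_insert.1 hx with rfl | hx' <;> rcases Finset.mem_insert.1 hy with rfl | hy'
        · left; exact sle_refl _
        · right; exact sle_trans (hall y hy') hlez
        · left; exact sle_trans (hall x hx') hlez
        · exact hγ.2 x hx' y hy'
      · rw [Finset.card_insert_of_notMem hzγ]
        omega
      · intro x hx
        rcases Finset.mem_insert.1 hx with rfl | hx'
        · exact hp2
        · exact hhem x hx'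
    have hz1mem : z1 ∈ ZS := by
      apply hmem_z z1 hszz1
      · exact ⟨Finset.subset_insert _ _, subset_rfl⟩
      · simp only [hz1]
        rw [Finset.disjoint_left]
        intro a ha
        rcases Finset.mem_insert.1 ha with rfl | ha'
        · intro h2; exact hqxm (Finset.mem_union_right _ h2)
        · exact Finset.disjoint_left.1 hxm_disj ha'
      · rw [hsuppz1]
        intro a ha
        rcases Finset.mem_insert.1 ha with rfl | ha'
        · exact hqU
        · exact hxm_sub ha'
      · simp only [hz1]; exact hxm_p2
    -- characterization of ZS elements
    have hchar : ∀ z ∈ ZS, z = z1 ∨ z = z2 := by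
      intro z hz
      have hzd := hszZ z hz
      have hlez := hxm_le_z z hz
      simp only [hZS, Finset.mem_filter, Finset.mem_univ, true_and] at hz
      obtain ⟨hzγ, ⟨hch, hcd⟩, hhem'⟩ := hz
      have hzval := hch.1 z (Finset.mem_insert_self _ _)
      have hzdisj := hzval.1
      have hsuppU : supp z = U := by
        apply Finset.eq_of_subset_of_card_le hzval.2.1
        have : sz z = (supp z).card := rfl
        omega
      have hqz : q ∈ supp z := by rw [hsuppU]; exact hqU
      rcases Finset.mem_union.1 hqz with hq1 | hq2
      · left
        have e1 : z.1 = insert q xm.1 := by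
          apply subset_antisymm
          · intro a ha
            have haU : a ∈ U := by rw [← hsuppU]; exact Finset.mem_union_left _ ha
            by_cases haxm : a ∈ supp xm
            · rcases Finset.mem_union.1 haxm with h' | h'
              · exact Finset.mem_insert_of_mem h'
              · exact absurd ha (Finset.disjoint_right.1 hzdisj (hlez.2 h'))
            · rw [hUq a haU haxm]; exact Finset.mem_insert_self _ _
          · intro a ha
            rcases Finset.mem_insert.1 ha with rfl | ha'
            · exact hq1
            · exact hlez.1 ha'
        have e2 : z.2 = xm.2 := by
          apply subset_antisymm
          · intro a ha
            have haU : a ∈ U := by rw [← hsuppU]; exact Finset.mem_union_right _ ha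
            by_cases haxm : a ∈ supp xm
            · rcases Finset.mem_union.1 haxm with h' | h'
              · exact absurd ha (Finset.disjoint_left.1 hzdisj (hlez.1 h'))
              · exact h'
            · exfalso
              have : a = q := hUq a haU haxm
              subst this
              exact (Finset.disjoint_left.1 hzdisj hq1) ha
          · exact hlez.2
        rw [hz1, ← e1, ← e2]
      · right
        have e1 : z.1 = xm.1 := by
          apply subset_antisymm
          · intro a ha
            have haU : a ∈ U := by rw [← hsuppU]; exact Finset.mem_union_left _ ha
            by_cases haxm : a ∈ supp xm
            · rcases Finset.mem_union.1 haxm with h' | h'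
              · exact h'
              · exact absurd ha (Finset.disjoint_right.1 hzdisj (hlez.2 h'))
            · exfalso
              have : a = q := hUq a haU haxm
              subst this
              exact (Finset.disjoint_left.1 hzdisj ha) hq2
          · exact hlez.1
        have e2 : z.2 = insert q xm.2 := by
          apply subset_antisymm
          · intro a ha
            have haU : a ∈ U := by rw [← hsuppU]; exact Finset.mem_union_right _ ha
            by_cases haxm : a ∈ supp xm
            · rcases Finset.mem_union.1 haxm with h' | h'
              · exact absurd ha (Finset.disjoint_left.1 hzdisj (hlez.1 h'))
              · exact Finset.mem_insert_of_mem h'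
            · rw [hUq a haU haxm]; exact Finset.mem_insert_self _ _
          · intro a ha
            rcases Finset.mem_insert.1 ha with rfl | ha'
            · exact hq2
            · exact hlez.2 ha'
        rw [hz2, ← e1, ← e2]
    by_cases hqp : q = p
    · -- equatorial: only z1 survives
      have hEqua : Equa p γ := by
        intro y hy hpy
        exact hqxm (hqp ▸ (supp_mono (hall y hy)) hpy)
      rw [if_pos hEqua]
      have hZSeq : ZS = {z1} := by
        apply subset_antisymm
        · intro z hz
          rcases hchar z hz with rfl | rfl
          · exact Finset.mem_singleton_self _
          · exfalso
            simp only [hZS, Finset.mem_filter, Finset.mem_univ, true_and] at hz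
            exact hz.2.2 z2 (Finset.mem_insert_self _ _)
              (by simp only [hz2]; rw [← hqp]; exact Finset.mem_insert_self _ _)
        · intro z hz
          rw [Finset.mem_singleton.1 hz]
          exact hz1mem
      rw [hZSeq, Finset.card_singleton]
    · -- non-equatorial top case
      have hpxm : p ∈ supp xm := by
        by_contra hpx
        exact hqp ((hUq p hp hpx).symm ▸ rfl)
      have hnEqua : ¬ Equa p γ := by
        rcases hxmcase with ⟨hd1, hxe⟩ | ⟨hd2, hm, hszm⟩
        · rw [hxe] at hpxm; simp [supp] at hpxm
        · intro hEq
          exact hEq xm hm hpxm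
      rw [if_neg hnEqua]
      have hz2mem : z2 ∈ ZS := by
        apply hmem_z z2 hszz2
        · exact ⟨subset_rfl, Finset.subset_insert _ _⟩
        · simp only [hz2]
          rw [Finset.disjoint_left]
          intro a ha hain
          rcases Finset.mem_insert.1 hain with h2 | h2
          · exact hqxm (h2 ▸ Finset.mem_union_left _ ha)
          · exact Finset.disjoint_left.1 hxm_disj ha h2
        · rw [hsuppz2]
          intro a ha
          rcases Finset.mem_insert.1 ha with rfl | ha'
          · exact hqU
          · exact hxm_sub ha'
        · simp only [hz2]
          intro hpin
          rcases Finset.mem_insert.1 hpin with h2 | h2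
          · exact hqp h2.symm
          · exact hxm_p2 h2
      have hZSeq : ZS = {z1, z2} := by
        apply subset_antisymm
        · intro z hz
          rcases hchar z hz with rfl | rfl
          · exact Finset.mem_insert_self _ _
          · exact Finset.mem_insert_of_mem (Finset.mem_singleton_self _)
        · intro z hz
          rcases Finset.mem_insert.1 hz with rfl | hz'
          · exact hz1mem
          · rw [Finset.mem_singleton.1 hz']
            exact hz2mem
      rw [hZSeq]
      rw [Finset.card_insert_of_notMem, Finset.card_singleton]
      intro hzin
      have : z1 = z2 := Finset.mem_singleton.1 hzin
      have : z1.1 = z2.1 := congrArg Prod.fst this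
      simp only [hz1, hz2] at this
      have : q ∈ xm.1 := this ▸ Finset.mem_insert_self q xm.1
      exact hqxm (Finset.mem_union_left _ this)
  · -- middle case : d < r
    have hdlt : d < r := by omega
    obtain ⟨xp, hxp, hszp⟩ : ∃ xp ∈ γ, sz xp = d + 1 := by
      have : d + 1 ∈ S := hmem_S (d+1) (by omega) (by omega) (by omega)
      obtain ⟨x, hx, hxd⟩ := Finset.mem_image.1 this
      exact ⟨x, hx, hxd⟩
    have hxpval := hγ.1 xp hxp
    have hxmxp : sle xm xp := by
      rcases hxmcase with ⟨hd1, rfl⟩ | ⟨hd2, hm, hszm⟩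
      · exact ⟨Finset.empty_subset _, Finset.empty_subset _⟩
      · exact chain_sle_of_sz_le hγ hm hxp (by omega)
    have hΔcard : (supp xp \ supp xm).card = 2 := by
      rw [Finset.card_sdiff_of_subset (supp_mono hxmxp)]
      have h1 : (supp xp).card = d + 1 := hszp
      rw [h1, hxm_supp]
      omega
    obtain ⟨w1, w2, hw12, hΔ⟩ := Finset.card_eq_two.1 hΔcard
    have hwmem : ∀ w, w ∈ supp xp \ supp xm ↔ (w = w1 ∨ w = w2) := by
      intro w
      rw [hΔ]
      simp
    set zc : α → SV α := fun w => (xm.1 ∪ (xp.1 ∩ {w}), xm.2 ∪ (xp.2 ∩ {w})) with hzc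
    have hsuppzc : ∀ w, w ∈ supp xp \ supp xm → supp (zc w) = insert w (supp xm) := by
      intro w hw
      have hw1 : w ∈ xp.1 ∨ w ∈ xp.2 := Finset.mem_union.1 (Finset.mem_sdiff.1 hw).1
      simp only [hzc, supp]
      ext a
      simp only [Finset.mem_union, Finset.mem_inter, Finset.mem_singleton, Finset.mem_insert]
      constructor
      · rintro ((h | ⟨h1, rfl⟩) | (h | ⟨h1, rfl⟩))
        · right; left; exact h
        · left; rfl
        · right; right; exact h
        · left; rfl
      · rintro (rfl | (h | h))
        · rcases hw1 with h | h
          · left; right; exact ⟨h, rfl⟩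
          · right; right; exact ⟨h, rfl⟩
        · left; left; exact h
        · right; left; exact h
    have hszzc : ∀ w, w ∈ supp xp \ supp xm → sz (zc w) = d := by
      intro w hw
      have hw2 : w ∉ supp xm := (Finset.mem_sdiff.1 hw).2
      have : sz (zc w) = (insert w (supp xm)).card := by
        unfold sz
        rw [hsuppzc w hw]
      rw [this, Finset.card_insert_of_notMem hw2, hxm_supp]
      omega
    have hnotin : ∀ z : SV α, sz z = d → z ∉ γ := by
      intro z hzd hzin
      exact hdS (Finset.mem_image.2 ⟨z, hzin, hzd⟩)
    have hzcxp : ∀ w, sle (zc w) xp := by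
      intro w
      constructor
      · exact Finset.union_subset hxmxp.1 (Finset.inter_subset_left)
      · exact Finset.union_subset hxmxp.2 (Finset.inter_subset_left)
    have hxmzc : ∀ w, sle xm (zc w) := by
      intro w
      exact ⟨Finset.subset_union_left, Finset.subset_union_left⟩
    have hzcmem : ∀ w, w ∈ supp xp \ supp xm → zc w ∈ ZS := by
      intro w hw
      have hw1 : w ∈ supp xp := (Finset.mem_sdiff.1 hw).1
      have hw2 : w ∉ supp xm := (Finset.mem_sdiff.1 hw).2
      have hzd := hszzc w hw
      have hzγ := hnotin _ hzd
      have hdisj : Disjoint (zc w).1 (zc w).2 := by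
        simp only [hzc]
        rw [Finset.disjoint_left]
        rintro a ha hain
        rcases Finset.mem_union.1 ha with h | h
        · rcases Finset.mem_union.1 hain with h' | h'
          · exact Finset.disjoint_left.1 hxm_disj h h'
          · exact Finset.disjoint_left.1 hxpval.1 (hxmxp.1 h) (Finset.mem_of_mem_inter_left h')
        · rcases Finset.mem_union.1 hain with h' | h'
          · exact Finset.disjoint_left.1 hxpval.1 (Finset.mem_of_mem_inter_left h) (hxmxp.2 h')
          · exact Finset.disjoint_left.1 hxpval.1 (Finset.mem_of_mem_inter_left h)
              (Finset.mem_of_mem_inter_left h')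
      have hsub : supp (zc w) ⊆ U := by
        rw [hsuppzc w hw]
        intro a ha
        rcases Finset.mem_insert.1 ha with rfl | ha'
        · exact hxpval.2.1 hw1
        · exact hxm_sub ha'
      simp only [hZS, Finset.mem_filter, Finset.mem_univ, true_and]
      refine ⟨hzγ, ⟨⟨?_, ?_⟩, ?_⟩, ?_⟩
      · intro x hx
        rcases Finset.mem_insert.1 hx with rfl | hx'
        · refine ⟨hdisj, hsub, ?_⟩
          rw [← Finset.card_pos]
          have hsz' : sz (zc w) = (supp (zc w)).card := rfl
          omega
        · exact hγ.1 x hx'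
      · intro x hx y hy
        have hcomp : ∀ u ∈ γ, sle u (zc w) ∨ sle (zc w) u := by
          intro u hu
          have h1 := Finset.mem_Icc.1 (sz_mem_Icc hγ hu)
          have h2 : sz u ∈ S := Finset.mem_image.2 ⟨u, hu, rfl⟩
          have hne : sz u ≠ d := fun h => hdS (h ▸ h2)
          rcases lt_or_gt_of_ne hne with hlt | hgt
          · left; exact sle_trans (hxm_le u hu hlt) (hxmzc w)
          · right
            refine sle_trans (hzcxp w) (chain_sle_of_sz_le hγ hxp hu ?_)
            omega
        rcases Finset.mem_insert.1 hx with rfl | hx' <;> rcases Finset.mem_insert.1 hy with rfl | hy'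
        · left; exact sle_refl _
        · rcases hcomp y hy' with h | h
          · right; exact h
          · left; exact h
        · exact hcomp x hx'
        · exact hγ.2 x hx' y hy'
      · rw [Finset.card_insert_of_notMem hzγ]
        omega
      · intro x hx
        rcases Finset.mem_insert.1 hx with rfl | hx'
        · simp only [hzc]
          intro hpin
          rcases Finset.mem_union.1 hpin with h | h
          · exact hxm_p2 h
          · exact hhem xp hxp (Finset.mem_of_mem_inter_left h)
        · exact hhem x hx'
    have hchar : ∀ z ∈ ZS, ∃ w ∈ supp xp \ supp xm, z = zc w := by
      intro z hz
      have hzd := hszZ z hz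
      have hlez := hxm_le_z z hz
      simp only [hZS, Finset.mem_filter, Finset.mem_univ, true_and] at hz
      obtain ⟨hzγ, ⟨hch, hcd⟩, hhem'⟩ := hz
      have hzval := hch.1 z (Finset.mem_insert_self _ _)
      have hzdisj := hzval.1
      have hzxp : sle z xp := by
        apply chain_sle_of_sz_le hch (Finset.mem_insert_self _ _) (Finset.mem_insert_of_mem hxp)
        omega
      have hsd1 : (supp z \ supp xm).card = 1 := by
        rw [Finset.card_sdiff_of_subset (supp_mono hlez)]
        have h1 : sz z = (supp z).card := rfl
        rw [← h1, hzd, hxm_supp]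
        omega
      obtain ⟨w, hw⟩ := Finset.card_eq_one.1 hsd1
      have hwz : w ∈ supp z := (Finset.mem_sdiff.1 (hw ▸ Finset.mem_singleton_self w)).1
      have hwxm : w ∉ supp xm := (Finset.mem_sdiff.1 (hw ▸ Finset.mem_singleton_self w)).2
      have hwΔ : w ∈ supp xp \ supp xm :=
        Finset.mem_sdiff.2 ⟨supp_mono hzxp hwz, hwxm⟩
      have hsuppz : supp z = insert w (supp xm) := by
        have h1 : supp xm ∪ (supp z \ supp xm) = supp z := Finset.union_sdiff_of_subset (supp_mono hlez)
        rw [hw] at h1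
        rw [← h1]
        ext a
        simp only [Finset.mem_union, Finset.mem_singleton, Finset.mem_insert]
        tauto
      refine ⟨w, hwΔ, ?_⟩
      have e1 : z.1 = xm.1 ∪ (xp.1 ∩ {w}) := by
        apply subset_antisymm
        · intro a ha
          have haz : a ∈ supp z := Finset.mem_union_left _ ha
          rw [hsuppz] at haz
          rcases Finset.mem_insert.1 haz with rfl | haxm
          · exact Finset.mem_union_right _ (Finset.mem_inter.2 ⟨hzxp.1 ha, Finset.mem_singleton_self _⟩)
          · rcases Finset.mem_union.1 haxm with h' | h'
            · exact Finset.mem_union_left _ h'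
            · exact absurd ha (Finset.disjoint_right.1 hzdisj (hlez.2 h'))
        · intro a ha
          rcases Finset.mem_union.1 ha with h' | h'
          · exact hlez.1 h'
          · obtain ⟨h1, h2⟩ := Finset.mem_inter.1 h'
            rw [Finset.mem_singleton.1 h2]
            rcases Finset.mem_union.1 hwz with h3 | h3
            · exact h3
            · exfalso
              exact Finset.disjoint_left.1 hxpval.1 (by rw [Finset.mem_singleton.1 h2] at h1; exact h1) (hzxp.2 h3)
      have e2 : z.2 = xm.2 ∪ (xp.2 ∩ {w}) := by
        apply subset_antisymm
        · intro a ha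
          have haz : a ∈ supp z := Finset.mem_union_right _ ha
          rw [hsuppz] at haz
          rcases Finset.mem_insert.1 haz with rfl | haxm
          · exact Finset.mem_union_right _ (Finset.mem_inter.2 ⟨hzxp.2 ha, Finset.mem_singleton_self _⟩)
          · rcases Finset.mem_union.1 haxm with h' | h'
            · exact absurd ha (Finset.disjoint_left.1 hzdisj (hlez.1 h'))
            · exact Finset.mem_union_left _ h'
        · intro a ha
          rcases Finset.mem_union.1 ha with h' | h'
          · exact hlez.2 h'
          · obtain ⟨h1, h2⟩ := Finset.mem_inter.1 h'
            rw [Finset.mem_singleton.1 h2]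
            rcases Finset.mem_union.1 hwz with h3 | h3
            · exfalso
              exact Finset.disjoint_right.1 hxpval.1 (by rw [Finset.mem_singleton.1 h2] at h1; exact h1) (hzxp.1 h3)
            · exact h3
      have : z = (z.1, z.2) := rfl
      rw [this, e1, e2]
    have hnEqua : ¬ Equa p γ := by
      have : r ∈ S := hmem_S r (by omega) (by omega) (by omega)
      obtain ⟨y, hy, hyr⟩ := Finset.mem_image.1 this
      have hysupp : supp y = U := by
        apply Finset.eq_of_subset_of_card_le (hγ.1 y hy).2.1
        have : sz y = (supp y).card := rfl
        omega
      intro hEq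
      exact hEq y hy (hysupp ▸ hp)
    rw [if_neg hnEqua]
    have hZSeq : ZS = {zc w1, zc w2} := by
      apply subset_antisymm
      · intro z hz
        obtain ⟨w, hwΔ, rfl⟩ := hchar z hz
        rcases (hwmem w).1 hwΔ with rfl | rfl
        · exact Finset.mem_insert_self _ _
        · exact Finset.mem_insert_of_mem (Finset.mem_singleton_self _)
      · intro z hz
        rcases Finset.mem_insert.1 hz with rfl | hz'
        · exact hzcmem w1 ((hwmem w1).2 (Or.inl rfl))
        · rw [Finset.mem_singleton.1 hz']
          exact hzcmem w2 ((hwmem w2).2 (Or.inr rfl))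
    rw [hZSeq]
    rw [Finset.card_insert_of_notMem, Finset.card_singleton]
    intro hzin
    have heq : zc w1 = zc w2 := Finset.mem_singleton.1 hzin
    have hw1Δ : w1 ∈ supp xp \ supp xm := (hwmem w1).2 (Or.inl rfl)
    have hw2Δ : w2 ∈ supp xp \ supp xm := (hwmem w2).2 (Or.inr rfl)
    have h1 : supp (zc w1) = insert w1 (supp xm) := hsuppzc w1 hw1Δ
    have h2 : supp (zc w2) = insert w2 (supp xm) := hsuppzc w2 hw2Δ
    have : w1 ∈ supp (zc w2) := by rw [← heq, h1]; exact Finset.mem_insert_self _ _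
    rw [h2] at this
    rcases Finset.mem_insert.1 this with h3 | h3
    · exact hw12 h3
    · exact (Finset.mem_sdiff.1 hw1Δ).2 h3

/-! ### Labels, sorting, and goodness -/

def kle (a b : ℤ) : Prop := a.natAbs < b.natAbs ∨ (a.natAbs = b.natAbs ∧ a ≤ b)

instance : DecidableRel kle := fun a b => by unfold kle; infer_instance

instance : IsTrans ℤ kle := ⟨by intro a b c h1 h2; unfold kle at *; omega⟩

instance : IsAntisymm ℤ kle := ⟨by intro a b h1 h2; unfold kle at *; omega⟩

instance : IsTotal ℤ kle := ⟨by intro a b; unfold kle; omega⟩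

noncomputable def labs (lam : SV α → ℤ) (σ : Finset (SV α)) : List ℤ :=
  Multiset.sort (σ.val.map lam) kle

lemma labs_coe (lam : SV α → ℤ) (σ : Finset (SV α)) :
    (labs lam σ : Multiset ℤ) = σ.val.map lam := Multiset.sort_eq _ _

lemma labs_sorted (lam : SV α → ℤ) (σ : Finset (SV α)) :
    (labs lam σ).Pairwise kle := Multiset.pairwise_sort _ _

lemma labs_length (lam : SV α → ℤ) (σ : Finset (SV α)) :
    (labs lam σ).length = σ.card := by
  have := congrArg Multiset.card (labs_coe lam σ)
  simpa using this

lemma mem_labs {lam : SV α → ℤ} {σ : Finset (SV α)} {a : ℤ} :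
    a ∈ labs lam σ ↔ ∃ x ∈ σ, lam x = a := by
  rw [← Multiset.mem_coe, labs_coe, Multiset.mem_map]
  rfl

def Goodp (lam : SV α → ℤ) (σ : Finset (SV α)) : Prop := AltL 1 0 (labs lam σ)
def Goodm (lam : SV α → ℤ) (σ : Finset (SV α)) : Prop := AltL (-1) 0 (labs lam σ)

section ChainLabels

variable {U : Finset α} {lam : SV α → ℤ}

lemma chain_labs_pos {σ : Finset (SV α)}
    (Hnc : ∀ x y : SV α, SVvalid U x → SVvalid U y → sle x y → lam y ≠ - lam x)
    (hσ : ChainIn U σ) :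
    ∀ a ∈ labs lam σ, 0 < a.natAbs := by
  intro a ha
  obtain ⟨x, hx, rfl⟩ := mem_labs.1 ha
  have hval := hσ.1 x hx
  have := Hnc x x hval hval (sle_refl x)
  omega

lemma chain_labs_nc {σ : Finset (SV α)}
    (Hnc : ∀ x y : SV α, SVvalid U x → SVvalid U y → sle x y → lam y ≠ - lam x)
    (hσ : ChainIn U σ) :
    ∀ a ∈ labs lam σ, ∀ b ∈ labs lam σ, a.natAbs = b.natAbs → a = b := by
  intro a ha b hb hab
  obtain ⟨x, hx, rfl⟩ := mem_labs.1 ha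
  obtain ⟨y, hy, rfl⟩ := mem_labs.1 hb
  rcases Int.natAbs_eq_natAbs_iff.1 hab with h | h
  · exact h
  · exfalso
    rcases hσ.2 x hx y hy with hc | hc
    · exact Hnc x y (hσ.1 x hx) (hσ.1 y hy) hc (by omega)
    · exact Hnc y x (hσ.1 y hy) (hσ.1 x hx) hc (by omega)

lemma chain_labs_abs_sorted {σ : Finset (SV α)} :
    (labs lam σ).Pairwise (fun a b => a.natAbs ≤ b.natAbs) := by
  apply List.Pairwise.imp _ (labs_sorted lam σ)
  intro a b h
  unfold kle at h
  omega

end ChainLabels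

/-! ### AltL under negation -/

lemma AltL_neg (L : List ℤ) : ∀ (s : ℤ) (m : ℕ), AltL s m (L.map (fun a => -a)) ↔ AltL (-s) m L := by
  induction L with
  | nil => intro s m; simp [AltL]
  | cons h t IH =>
    intro s m
    simp only [List.map_cons, AltL_cons]
    have e1 : s * -h = (-s) * h := by ring
    have e2 : (-h).natAbs = h.natAbs := Int.natAbs_neg h
    rw [e1, e2, IH (-s) h.natAbs]

/-! ### extracting a large label -/

lemma AltL_big (L : List ℤ) : ∀ (s : ℤ) (m : ℕ), AltL s m L → L ≠ [] →
    ∃ a ∈ L, m + L.length ≤ a.natAbs := by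
  induction L with
  | nil => intro s m _ h; exact absurd rfl h
  | cons h t IH =>
    intro s m hA _
    rw [AltL_cons] at hA
    obtain ⟨h1, h2, h3⟩ := hA
    rcases eq_or_ne t [] with rfl | hne
    · exact ⟨h, by simp, by simp; omega⟩
    · obtain ⟨a, ha, hbig⟩ := IH (-s) h.natAbs h3 hne
      refine ⟨a, by simp [ha], ?_⟩
      simp only [List.length_cons]
      omega

/-! ### bridging the chain-level count and the list-level count -/

lemma eq_of_perm_of_sorted' {l₁ l₂ : List ℤ} (hp : l₁.Perm l₂) (h1 : l₁.Pairwise kle)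
    (h2 : l₂.Pairwise kle) : l₁ = l₂ :=
  List.Perm.eq_of_pairwise' h1 h2 hp

lemma sort_fix (l : List ℤ) (h : l.Pairwise kle) : Multiset.sort (l : Multiset ℤ) kle = l :=
  eq_of_perm_of_sorted' (Multiset.coe_eq_coe.1 (Multiset.sort_eq (l : Multiset ℤ) kle))
    (Multiset.pairwise_sort _ _) h

lemma sum_idx (F : Multiset ℤ → ℕ) : ∀ (L : List ℤ),
    ∑ i ∈ Finset.range L.length, F ((L.eraseIdx i : List ℤ) : Multiset ℤ)
      = (((L : Multiset ℤ)).map (fun v => F (((L : Multiset ℤ)).erase v))).sum := by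
  intro L
  induction L generalizing F with
  | nil => simp
  | cons h t IH =>
    rw [List.length_cons, Finset.sum_range_succ']
    have e0 : ((h :: t).eraseIdx 0 : List ℤ) = t := rfl
    have e1 : ∀ i, ((h :: t).eraseIdx (i+1) : List ℤ) = h :: (t.eraseIdx i) := fun i => rfl
    simp only [e0, e1]
    have e2 : ∀ i, ((h :: t.eraseIdx i : List ℤ) : Multiset ℤ) = h ::ₘ ((t.eraseIdx i : List ℤ) : Multiset ℤ) := fun i => rfl
    simp only [e2]
    rw [IH (fun M => F (h ::ₘ M))]
    have e3 : ((h :: t : List ℤ) : Multiset ℤ) = h ::ₘ (t : Multiset ℤ) := rfl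
    rw [e3, Multiset.map_cons, Multiset.sum_cons, Multiset.erase_cons_head]
    rw [add_comm]
    congr 1
    apply congrArg
    apply Multiset.map_congr rfl
    intro v hv
    by_cases hvh : v = h
    · subst hvh
      rw [Multiset.erase_cons_head, Multiset.cons_erase hv]
    · rw [Multiset.erase_cons_tail _ (Ne.symm hvh)]

lemma map_erase_lam (lam : SV α → ℤ) {s : Finset (SV α)} {x : SV α} (hx : x ∈ s) :
    (s.erase x).val.map lam = (s.val.map lam).erase (lam x) := by
  rw [Finset.erase_val]
  have hxv : x ∈ s.val := hx
  have h1 : s.val.map lam = lam x ::ₘ (s.val.erase x).map lam := by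
    rw [← Multiset.map_cons, Multiset.cons_erase hxv]
  rw [h1, Multiset.erase_cons_head]

lemma D_eq_cnt (lam : SV α → ℤ) (s : ℤ) (m : ℕ) (σ : Finset (SV α)) :
    ∑ x ∈ σ, ind (AltL s m (labs lam (σ.erase x))) = cnt s m (labs lam σ) := by
  classical
  set M : Multiset ℤ := σ.val.map lam with hM
  have step1 : ∀ x ∈ σ, ind (AltL s m (labs lam (σ.erase x)))
      = ind (AltL s m (Multiset.sort (M.erase (lam x)) kle)) := by
    intro x hx
    unfold labs
    rw [map_erase_lam lam hx]
  rw [Finset.sum_congr rfl step1]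
  have step2 : ∑ x ∈ σ, ind (AltL s m (Multiset.sort (M.erase (lam x)) kle))
      = (M.map (fun v => ind (AltL s m (Multiset.sort (M.erase v) kle)))).sum := by
    rw [Finset.sum_eq_multiset_sum, hM, Multiset.map_map]
    rfl
  rw [step2]
  have hL : (labs lam σ : Multiset ℤ) = M := labs_coe lam σ
  have step3 := sum_idx (fun Mm => ind (AltL s m (Multiset.sort Mm kle))) (labs lam σ)
  rw [hL] at step3
  rw [← step3]
  unfold cnt
  apply Finset.sum_congr rfl
  intro i hi
  have hi' : i < (labs lam σ).length := Finset.mem_range.1 hi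
  have hsorted : ((labs lam σ).eraseIdx i).Pairwise kle :=
    List.Pairwise.sublist (List.eraseIdx_sublist _ i) (labs_sorted lam σ)
  rw [sort_fix _ hsorted]

section FacetParity

variable {U : Finset α} {lam : SV α → ℤ}

lemma facet_parity
    (Hnc : ∀ x y : SV α, SVvalid U x → SVvalid U y → sle x y → lam y ≠ - lam x)
    {σ : Finset (SV α)} (hσ : ChainIn U σ) :
    (∑ x ∈ σ, ind (Goodp lam (σ.erase x))) % 2
      = (ind (Goodp lam σ) + ind (Goodm lam σ)) % 2 := by
  have h1 : ∑ x ∈ σ, ind (Goodp lam (σ.erase x)) = cnt 1 0 (labs lam σ) := D_eq_cnt lam 1 0 σ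
  rw [h1]
  have := cnt_parity (labs lam σ) 1 0 (Or.inl rfl) chain_labs_abs_sorted
    (chain_labs_nc Hnc hσ) (chain_labs_pos Hnc hσ)
  exact this

end FacetParity

/-! ### negation -/

def nsv (x : SV α) : SV α := (x.2, x.1)

lemma nsv_invol (x : SV α) : nsv (nsv x) = x := rfl

lemma nsv_inj : Function.Injective (nsv (α := α)) := by
  intro x y h
  have := congrArg nsv h
  rwa [nsv_invol, nsv_invol] at this

lemma supp_nsv (x : SV α) : supp (nsv x) = supp x := Finset.union_comm _ _

lemma valid_nsv {U : Finset α} {x : SV α} (h : SVvalid U x) : SVvalid U (nsv x) :=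
  ⟨h.1.symm, by rw [supp_nsv]; exact h.2.1, by rw [supp_nsv]; exact h.2.2⟩

lemma sle_nsv {x y : SV α} (h : sle x y) : sle (nsv x) (nsv y) := ⟨h.2, h.1⟩

section Negation

variable {U : Finset α} {lam : SV α → ℤ}

lemma chain_nsv {σ : Finset (SV α)} (hσ : ChainIn U σ) : ChainIn U (σ.image nsv) := by
  constructor
  · intro x hx
    obtain ⟨y, hy, rfl⟩ := Finset.mem_image.1 hx
    exact valid_nsv (hσ.1 y hy)
  · intro x hx y hy
    obtain ⟨x', hx', rfl⟩ := Finset.mem_image.1 hx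
    obtain ⟨y', hy', rfl⟩ := Finset.mem_image.1 hy
    rcases hσ.2 x' hx' y' hy' with h | h
    · exact Or.inl (sle_nsv h)
    · exact Or.inr (sle_nsv h)

lemma labs_nsv
    (Hanti : ∀ x : SV α, SVvalid U x → lam (nsv x) = - lam x)
    (Hnc : ∀ x y : SV α, SVvalid U x → SVvalid U y → sle x y → lam y ≠ - lam x)
    {σ : Finset (SV α)} (hσ : ChainIn U σ) :
    labs lam (σ.image nsv) = (labs lam σ).map (fun a => -a) := by
  apply eq_of_perm_of_sorted'
  · apply Multiset.coe_eq_coe.1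
    rw [labs_coe]
    have e1 : (σ.image nsv).val = σ.val.map nsv :=
      Finset.image_val_of_injOn (nsv_inj.injOn)
    rw [e1, Multiset.map_map]
    have e2 : σ.val.map (lam ∘ nsv) = σ.val.map (fun x => - lam x) := by
      apply Multiset.map_congr rfl
      intro x hx
      exact Hanti x (hσ.1 x hx)
    rw [e2]
    have e3 : ((labs lam σ).map (fun a => -a) : Multiset ℤ)
        = ((labs lam σ : Multiset ℤ)).map (fun a => -a) := by
      simp
    rw [e3, labs_coe, Multiset.map_map]
    rfl
  · exact labs_sorted _ _
  · rw [List.pairwise_map]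
    apply List.Pairwise.imp_of_mem _ (labs_sorted lam σ)
    intro a b ha hb hab
    unfold kle at *
    rcases hab with h | ⟨h1, h2⟩
    · left; simpa using h
    · have : a = b := chain_labs_nc Hnc hσ a ha b hb h1
      subst this
      right
      simp
end Negation

/-! ### auxiliary chain facts -/

lemma chain_subset {U : Finset α} {σ γ : Finset (SV α)} (hσ : ChainIn U σ) (h : γ ⊆ σ) :
    ChainIn U γ :=
  ⟨fun x hx => hσ.1 x (h hx), fun x hx y hy => hσ.2 x (h hx) y (h hy)⟩

lemma hem_flip {U : Finset α} {σ : Finset (SV α)} (hσ : ChainIn U σ) {p : α}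
    (h : ¬ Hem p σ) : ∀ x ∈ σ, p ∉ x.1 := by
  unfold Hem at h
  push_neg at h
  obtain ⟨x0, hx0, hp0⟩ := h
  intro x hx hp1
  rcases hσ.2 x hx x0 hx0 with hc | hc
  · exact Finset.disjoint_left.1 (hσ.1 x0 hx0).1 (hc.1 hp1) hp0
  · exact Finset.disjoint_left.1 (hσ.1 x hx).1 hp1 (hc.2 hp0)

lemma card_filter_ind {β : Type*} [Fintype β] (s : Finset β) (q : β → Prop) :
    (s.filter q).card = ∑ a ∈ s, ind (q a) := by
  rw [Finset.card_filter]
  apply Finset.sum_congr rfl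
  intro a _
  by_cases h : q a
  · simp [ind, h]
  · simp [ind, h]

lemma sum_mod_congr {β : Type*} (s : Finset β) (f g : β → ℕ)
    (h : ∀ b ∈ s, f b % 2 = g b % 2) : (∑ b ∈ s, f b) % 2 = (∑ b ∈ s, g b) % 2 := by
  rw [Finset.sum_nat_mod s 2 f, Finset.sum_nat_mod s 2 g, Finset.sum_congr rfl h]

/-! ### the main parity theorem -/

theorem main_odd : ∀ (n : ℕ) (U : Finset α) (lam : SV α → ℤ), U.card = n →
    (∀ x : SV α, SVvalid U x → lam (nsv x) = - lam x) →
    (∀ x y : SV α, SVvalid U x → SVvalid U y → sle x y → lam y ≠ - lam x) →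
    (Finset.univ.filter fun σ : Finset (SV α) => FullChain U σ ∧ Goodp lam σ).card % 2 = 1 := by
  intro n
  induction n with
  | zero =>
    intro U lam hU Hanti Hnc
    have hUe : U = ∅ := Finset.card_eq_zero.1 hU
    subst hUe
    have hfe : (Finset.univ.filter fun σ : Finset (SV α) => FullChain ∅ σ ∧ Goodp lam σ) = {∅} := by
      ext σ
      simp only [Finset.mem_filter, Finset.mem_univ, true_and, Finset.mem_singleton]
      constructor
      · rintro ⟨⟨-, hc⟩, -⟩
        exact Finset.card_eq_zero.1 (by rw [hc]; simp)
      · rintro rfl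
        refine ⟨⟨⟨fun x hx => absurd hx (Finset.notMem_empty x), fun x hx => absurd hx (Finset.notMem_empty x)⟩, by simp⟩, ?_⟩
        unfold Goodp
        have : (labs lam (∅ : Finset (SV α)) : Multiset ℤ) = 0 := by
          rw [labs_coe]; simp
        have h2 : labs lam (∅ : Finset (SV α)) = [] := (Multiset.coe_eq_zero _).1 this
        rw [h2]
        exact AltL_nil _ _
    rw [hfe]
    simp
  | succ n IH =>
    intro U lam hU Hanti Hnc
    obtain ⟨p, hp⟩ := Finset.card_pos.1 (by omega : 0 < U.card)
    -- abbreviations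
    set F : Finset (SV α) → Prop := FullChain U with hF
    set Gp : Finset (SV α) → Prop := Goodp lam with hGp
    set Gm : Finset (SV α) → Prop := Goodm lam with hGm
    set FH : Finset (Finset (SV α)) := Finset.univ.filter (fun σ => F σ ∧ Hem p σ) with hFH
    -- hemisphere split
    have h_split : (Finset.univ.filter fun σ => F σ ∧ Gp σ).card
        = (Finset.univ.filter fun σ => (F σ ∧ Gp σ) ∧ Hem p σ).card
          + (Finset.univ.filter fun σ => (F σ ∧ Gp σ) ∧ ¬ Hem p σ).card := by
      have h0 := Finset.card_filter_add_card_filter_not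
        (s := Finset.univ.filter fun σ => F σ ∧ Gp σ) (p := fun σ => Hem p σ)
      rw [Finset.filter_filter, Finset.filter_filter] at h0
      exact h0.symm
    -- negation bijection
    have hGpGm : ∀ σ : Finset (SV α), ChainIn U σ → (Gp σ ↔ Gm (σ.image nsv)) := by
      intro σ hσ
      have h1 : labs lam (σ.image nsv) = (labs lam σ).map (fun a => -a) := labs_nsv Hanti Hnc hσ
      simp only [hGp, hGm, Goodp, Goodm, h1]
      rw [AltL_neg]
      try norm_num
    have hGmGp : ∀ σ : Finset (SV α), ChainIn U σ → (Gm σ ↔ Gp (σ.image nsv)) := by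
      intro σ hσ
      have h1 : labs lam (σ.image nsv) = (labs lam σ).map (fun a => -a) := labs_nsv Hanti Hnc hσ
      simp only [hGp, hGm, Goodp, Goodm, h1]
      rw [AltL_neg]
      try norm_num
    have hFull_nsv : ∀ σ : Finset (SV α), F σ → F (σ.image nsv) := by
      intro σ hσ
      refine ⟨chain_nsv hσ.1, ?_⟩
      rw [Finset.card_image_of_injective _ nsv_inj]
      exact hσ.2
    have hinvol : ∀ σ : Finset (SV α), (σ.image nsv).image nsv = σ := by
      intro σ
      rw [Finset.image_image]
      have : nsv ∘ nsv = (id : SV α → SV α) := funext nsv_invol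
      rw [this, Finset.image_id]
    have h_neg : (Finset.univ.filter fun σ => (F σ ∧ Gp σ) ∧ ¬ Hem p σ).card
        = (Finset.univ.filter fun σ => (F σ ∧ Gm σ) ∧ Hem p σ).card := by
      apply Finset.card_bij (fun σ _ => σ.image nsv)
      · intro σ hσ
        simp only [Finset.mem_filter, Finset.mem_univ, true_and] at hσ ⊢
        obtain ⟨⟨hf, hgp⟩, hnh⟩ := hσ
        refine ⟨⟨hFull_nsv σ hf, (hGpGm σ hf.1).1 hgp⟩, ?_⟩
        intro y hy
        obtain ⟨x, hx, rfl⟩ := Finset.mem_image.1 hy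
        exact hem_flip hf.1 hnh x hx
      · intro σ1 h1 σ2 h2 heq
        have := congrArg (fun s => Finset.image nsv s) heq
        simpa only [hinvol] using this
      · intro τ hτ
        simp only [Finset.mem_filter, Finset.mem_univ, true_and] at hτ
        obtain ⟨⟨hf, hgm⟩, hh⟩ := hτ
        refine ⟨τ.image nsv, ?_, hinvol τ⟩
        simp only [Finset.mem_filter, Finset.mem_univ, true_and]
        refine ⟨⟨hFull_nsv τ hf, ?_⟩, ?_⟩
        · exact (hGmGp τ hf.1).1 hgm
        · -- ¬ Hem p (τ.image nsv)
          obtain ⟨top, htop, hsupp, -⟩ := full_chain_top hf.1 hf.2 (by omega)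
          intro hHem
          have hptop : p ∈ top.1 ∪ top.2 := by
            have : p ∈ supp top := by rw [hsupp]; exact hp
            exact this
          rcases Finset.mem_union.1 hptop with h1 | h1
          · exact hHem (nsv top) (Finset.mem_image_of_mem _ htop) h1
          · exact hh top htop h1
    -- counting via sums over FH
    have h_A1 : (Finset.univ.filter fun σ => (F σ ∧ Gp σ) ∧ Hem p σ).card
        = ∑ σ ∈ FH, ind (Gp σ) := by
      rw [← card_filter_ind]
      congr 1
      ext σ
      simp only [hFH, Finset.mem_filter, Finset.mem_univ, true_and]
      tauto
    have h_A2 : (Finset.univ.filter fun σ => (F σ ∧ Gm σ) ∧ Hem p σ).card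
        = ∑ σ ∈ FH, ind (Gm σ) := by
      rw [← card_filter_ind]
      congr 1
      ext σ
      simp only [hFH, Finset.mem_filter, Finset.mem_univ, true_and]
      tauto
    -- facet parity
    have h_parity : (∑ σ ∈ FH, (ind (Gp σ) + ind (Gm σ))) % 2
        = (∑ σ ∈ FH, ∑ x ∈ σ, ind (Goodp lam (σ.erase x))) % 2 := by
      apply sum_mod_congr
      intro σ hσ
      simp only [hFH, Finset.mem_filter, Finset.mem_univ, true_and] at hσ
      exact (facet_parity Hnc hσ.1.1).symm
    -- rewrite D as a sum over γ
    have h_D : ∀ σ ∈ FH, ∑ x ∈ σ, ind (Goodp lam (σ.erase x))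
        = ∑ γ ∈ (Finset.univ : Finset (Finset (SV α))),
            ind ((γ ⊆ σ ∧ γ.card + 1 = U.card) ∧ Goodp lam γ) := by
      intro σ hσ
      simp only [hFH, Finset.mem_filter, Finset.mem_univ, true_and] at hσ
      have hσcard : σ.card = U.card := hσ.1.2
      rw [← card_filter_ind, ← card_filter_ind]
      apply Finset.card_bij (fun x _ => σ.erase x)
      · intro x hx
        simp only [Finset.mem_filter] at hx ⊢
        refine ⟨Finset.mem_univ _, ⟨Finset.erase_subset _ _, ?_⟩, hx.2⟩
        rw [Finset.card_erase_of_mem hx.1]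
        omega
      · intro x1 h1 x2 h2 heq
        simp only [Finset.mem_filter] at h1 h2
        by_contra hne
        have hmem : x1 ∈ σ.erase x2 := Finset.mem_erase.2 ⟨hne, h1.1⟩
        rw [← heq] at hmem
        exact Finset.notMem_erase x1 σ hmem
      · intro γ hγ
        simp only [Finset.mem_filter, Finset.mem_univ, true_and] at hγ
        obtain ⟨⟨hsub, hcard1⟩, hgood⟩ := hγ
        have hsd : (σ \ γ).card = 1 := by
          rw [Finset.card_sdiff_of_subset hsub]
          omega
        obtain ⟨x, hx⟩ := Finset.card_eq_one.1 hsd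
        have hxσ : x ∈ σ := (Finset.mem_sdiff.1 (hx ▸ Finset.mem_singleton_self x)).1
        have hxγ : x ∉ γ := (Finset.mem_sdiff.1 (hx ▸ Finset.mem_singleton_self x)).2
        refine ⟨x, Finset.mem_filter.2 ⟨hxσ, ?_⟩, ?_⟩
        · have : σ.erase x = γ := by
            ext a
            simp only [Finset.mem_erase]
            constructor
            · rintro ⟨hax, haσ⟩
              by_contra haγ
              have : a ∈ σ \ γ := Finset.mem_sdiff.2 ⟨haσ, haγ⟩
              rw [hx] at this
              exact hax (Finset.mem_singleton.1 this)
            · intro haγ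
              exact ⟨fun h => hxγ (h ▸ haγ), hsub haγ⟩
          rw [this]
          exact hgood
        · ext a
          simp only [Finset.mem_erase]
          constructor
          · rintro ⟨hax, haσ⟩
            by_contra haγ
            have : a ∈ σ \ γ := Finset.mem_sdiff.2 ⟨haσ, haγ⟩
            rw [hx] at this
            exact hax (Finset.mem_singleton.1 this)
          · intro haγ
            exact ⟨fun h => hxγ (h ▸ haγ), hsub haγ⟩
    -- the column sums
    have h_col : ∀ γ : Finset (SV α),
        ∑ σ ∈ FH, ind ((γ ⊆ σ ∧ γ.card + 1 = U.card) ∧ Goodp lam γ)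
        = if (γ.card + 1 = U.card ∧ Goodp lam γ ∧ ChainIn U γ ∧ Hem p γ)
            then (if Equa p γ then 1 else 2) else 0 := by
      intro γ
      by_cases hC : γ.card + 1 = U.card ∧ Goodp lam γ ∧ ChainIn U γ ∧ Hem p γ
      · rw [if_pos hC]
        obtain ⟨hc1, hc2, hc3, hc4⟩ := hC
        rw [← ext_count p U hp γ hc3 hc4 hc1]
        rw [← card_filter_ind]
        congr 1
        ext σ
        simp only [hFH, Finset.filter_filter, Finset.mem_filter, Finset.mem_univ, true_and, hF]
        constructor
        · rintro ⟨⟨hf, hh⟩, ⟨hsub, -⟩, -⟩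
          exact ⟨hf, hh, hsub⟩
        · rintro ⟨hf, hh, hsub⟩
          exact ⟨⟨hf, hh⟩, ⟨hsub, hc1⟩, hc2⟩
      · rw [if_neg hC]
        apply Finset.sum_eq_zero
        intro σ hσ
        simp only [hFH, Finset.mem_filter, Finset.mem_univ, true_and] at hσ
        apply ind_neg
        rintro ⟨⟨hsub, hcard1⟩, hgood⟩
        exact hC ⟨hcard1, hgood, chain_subset hσ.1.1 hsub,
          fun x hx => hσ.2 x (hsub hx)⟩
    -- collapse mod 2
    have h_mod2 : (∑ γ ∈ (Finset.univ : Finset (Finset (SV α))),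
          (if (γ.card + 1 = U.card ∧ Goodp lam γ ∧ ChainIn U γ ∧ Hem p γ)
            then (if Equa p γ then 1 else 2) else 0)) % 2
        = (∑ γ ∈ (Finset.univ : Finset (Finset (SV α))),
            ind ((γ.card + 1 = U.card ∧ Goodp lam γ ∧ ChainIn U γ ∧ Hem p γ) ∧ Equa p γ)) % 2 := by
      apply sum_mod_congr
      intro γ _
      by_cases hC : γ.card + 1 = U.card ∧ Goodp lam γ ∧ ChainIn U γ ∧ Hem p γ
      · by_cases hE : Equa p γ
        · rw [if_pos hC, if_pos hE]
          have h1 : ind ((γ.card + 1 = U.card ∧ Goodp lam γ ∧ ChainIn U γ ∧ Hem p γ) ∧ Equa p γ) = 1 := by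
            unfold ind
            rw [if_pos ⟨hC, hE⟩]
          rw [h1]
        · rw [if_pos hC, if_neg hE, ind_neg (fun h => hE h.2)]
      · rw [if_neg hC, ind_neg (fun h => hC h.1)]
    -- identification with the equator
    have h_equator : (∑ γ ∈ (Finset.univ : Finset (Finset (SV α))),
          ind ((γ.card + 1 = U.card ∧ Goodp lam γ ∧ ChainIn U γ ∧ Hem p γ) ∧ Equa p γ))
        = (Finset.univ.filter fun γ : Finset (SV α) =>
            FullChain (U.erase p) γ ∧ Goodp lam γ).card := by
      rw [← card_filter_ind]
      congr 1
      ext γ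
      simp only [Finset.mem_filter, Finset.mem_univ, true_and]
      constructor
      · rintro ⟨⟨hc1, hc2, hc3, hc4⟩, hE⟩
        refine ⟨⟨⟨?_, ?_⟩, ?_⟩, hc2⟩
        · intro x hx
          obtain ⟨hd, hsub, hne⟩ := hc3.1 x hx
          refine ⟨hd, ?_, hne⟩
          intro a ha
          exact Finset.mem_erase.2 ⟨fun h => hE x hx (h ▸ ha), hsub ha⟩
        · exact hc3.2
        · rw [Finset.card_erase_of_mem hp]
          omega
      · rintro ⟨⟨⟨hv, hcmp⟩, hcard'⟩, hgood⟩
        have hval : ∀ x ∈ γ, SVvalid U x := by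
          intro x hx
          obtain ⟨hd, hsub, hne⟩ := hv x hx
          exact ⟨hd, hsub.trans (Finset.erase_subset _ _), hne⟩
        have hEq : Equa p γ := by
          intro x hx hpx
          exact (Finset.mem_erase.1 ((hv x hx).2.1 hpx)).1 rfl
        refine ⟨⟨?_, hgood, ⟨hval, hcmp⟩, ?_⟩, hEq⟩
        · rw [Finset.card_erase_of_mem hp] at hcard'
          omega
        · intro x hx hpx
          exact hEq x hx (Finset.mem_union_right _ hpx)
    -- apply the induction hypothesis
    have hIH := IH (U.erase p) lam (by rw [Finset.card_erase_of_mem hp]; omega)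
      (fun x hx => Hanti x ⟨hx.1, hx.2.1.trans (Finset.erase_subset _ _), hx.2.2⟩)
      (fun x y hx hy hle => Hnc x y
        ⟨hx.1, hx.2.1.trans (Finset.erase_subset _ _), hx.2.2⟩
        ⟨hy.1, hy.2.1.trans (Finset.erase_subset _ _), hy.2.2⟩ hle)
    -- chain everything together
    rw [h_split, h_neg, h_A1, h_A2, ← Finset.sum_add_distrib]
    rw [h_parity]
    rw [Finset.sum_congr rfl h_D]
    rw [Finset.sum_comm]
    rw [Finset.sum_congr rfl (fun γ _ => h_col γ)]
    rw [h_mod2]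
    rw [h_equator]
    exact hIH

/-! ### conclusion : some label is large -/

theorem otl_exists (U : Finset α) (hU : U.Nonempty) (lam : SV α → ℤ)
    (Hanti : ∀ x : SV α, SVvalid U x → lam (nsv x) = - lam x)
    (Hnc : ∀ x y : SV α, SVvalid U x → SVvalid U y → sle x y → lam y ≠ - lam x) :
    ∃ x : SV α, SVvalid U x ∧ U.card ≤ (lam x).natAbs := by
  have hodd := main_odd U.card U lam rfl Hanti Hnc
  have hpos : 0 < (Finset.univ.filter fun σ : Finset (SV α) => FullChain U σ ∧ Goodp lam σ).card := by
    omega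
  obtain ⟨σ, hσ⟩ := Finset.card_pos.1 hpos
  rw [Finset.mem_filter] at hσ
  obtain ⟨-, hfull, hgood⟩ := hσ
  have hlen : (labs lam σ).length = U.card := by
    rw [labs_length, hfull.2]
  have hne : labs lam σ ≠ [] := by
    intro h
    rw [h] at hlen
    simp at hlen
    have := Finset.card_pos.2 hU
    omega
  obtain ⟨a, ha, hbig⟩ := AltL_big (labs lam σ) 1 0 hgood hne
  obtain ⟨x, hx, rfl⟩ := mem_labs.1 ha
  refine ⟨x, hfull.1.1 x hx, ?_⟩
  omega

/-! ### the Kneser labelling -/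

section Kneser

noncomputable def pickk (k : ℕ) {n : ℕ} (A : Finset (Fin n)) : Finset (Fin n) :=
  ((A.sort (· ≤ ·)).take k).toFinset

lemma pickk_subset (k : ℕ) {n : ℕ} (A : Finset (Fin n)) : pickk k A ⊆ A := by
  intro a ha
  unfold pickk at ha
  rw [List.mem_toFinset] at ha
  have := (List.take_sublist k _).subset ha
  rwa [Finset.mem_sort] at this

lemma pickk_card (k : ℕ) {n : ℕ} (A : Finset (Fin n)) (h : k ≤ A.card) :
    (pickk k A).card = k := by
  unfold pickk
  rw [List.toFinset_card_of_nodup ((Finset.sort_nodup _ _).sublist (List.take_sublist k _))]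
  rw [List.length_take, Finset.length_sort]
  omega

def sgn {n : ℕ} (x : SV (Fin n)) : Prop :=
  ∃ h : (supp x).Nonempty, (supp x).min' h ∈ x.1

lemma min'_congr {n : ℕ} (s s' : Finset (Fin n)) (hs : s.Nonempty) (hs' : s'.Nonempty)
    (h : s = s') : s.min' hs = s'.min' hs' := by
  subst h; rfl

lemma sgn_nsv_iff {n : ℕ} (x : SV (Fin n)) (hd : Disjoint x.1 x.2)
    (hne : (supp x).Nonempty) : sgn (nsv x) ↔ ¬ sgn x := by
  have hne' : (supp (nsv x)).Nonempty := by rw [supp_nsv]; exact hne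
  have hmineq : (supp (nsv x)).min' hne' = (supp x).min' hne :=
    min'_congr _ _ _ _ (supp_nsv x)
  constructor
  · rintro ⟨h1, hmem⟩ ⟨h2, hmem2⟩
    have e1 : (supp (nsv x)).min' h1 = (supp (nsv x)).min' hne' := rfl
    have e2 : (supp x).min' h2 = (supp x).min' hne := rfl
    rw [e1, hmineq] at hmem
    rw [e2] at hmem2
    exact Finset.disjoint_left.1 hd hmem2 hmem
  · intro hns
    refine ⟨hne', ?_⟩
    show (supp (nsv x)).min' hne' ∈ x.2
    rw [hmineq]
    have hmm : (supp x).min' hne ∈ supp x := Finset.min'_mem _ _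
    rcases Finset.mem_union.1 hmm with h1 | h1
    · exact absurd ⟨hne, h1⟩ hns
    · exact h1

noncomputable def klam (k t : ℕ) (c : Finset (Fin (2*k+t)) → Fin (t+1))
    (x : SV (Fin (2*k+t))) : ℤ :=
  if (supp x).card + 2 ≤ 2*k then
    (if sgn x then ((supp x).card : ℤ) else -((supp x).card : ℤ))
  else
    if k ≤ x.1.card ∧ (x.2.card < k ∨ sgn x) then
      (2*(k:ℤ) - 1) + ((c (pickk k x.1) : ℕ) : ℤ)
    else
      -((2*(k:ℤ) - 1) + ((c (pickk k x.2) : ℕ) : ℤ))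

variable {k t : ℕ} {c : Finset (Fin (2*k+t)) → Fin (t+1)}

lemma klam_natAbs_small (hk : 0 < k) (x : SV (Fin (2*k+t)))
    (hsmall : (supp x).card + 2 ≤ 2*k) :
    (klam k t c x).natAbs = (supp x).card := by
  unfold klam
  rw [if_pos hsmall]
  by_cases h : sgn x
  · rw [if_pos h]; simp
  · rw [if_neg h]; simp

lemma klam_natAbs_big (hk : 0 < k) (x : SV (Fin (2*k+t)))
    (hbig : ¬ ((supp x).card + 2 ≤ 2*k)) :
    ∃ j : Fin (t+1), (klam k t c x).natAbs = 2*k - 1 + (j : ℕ) := by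
  unfold klam
  rw [if_neg hbig]
  by_cases h : k ≤ x.1.card ∧ (x.2.card < k ∨ sgn x)
  · rw [if_pos h]
    exact ⟨c (pickk k x.1), by omega⟩
  · rw [if_neg h]
    exact ⟨c (pickk k x.2), by omega⟩

end Kneser

section KneserMain

variable {k t : ℕ} {c : Finset (Fin (2*k+t)) → Fin (t+1)}

lemma supp_card_eq {n : ℕ} (x : SV (Fin n)) (hd : Disjoint x.1 x.2) :
    (supp x).card = x.1.card + x.2.card := Finset.card_union_of_disjoint hd

lemma big_else (hk : 0 < k) (x : SV (Fin (2*k+t))) (hd : Disjoint x.1 x.2)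
    (hbig : ¬ ((supp x).card + 2 ≤ 2*k))
    (hncond : ¬ (k ≤ x.1.card ∧ (x.2.card < k ∨ sgn x))) : k ≤ x.2.card := by
  have hsum := supp_card_eq x hd
  push_neg at hncond
  by_cases h : k ≤ x.1.card
  · exact (hncond h).1
  · omega

lemma klam_anti (hk : 0 < k) (x : SV (Fin (2*k+t))) (hd : Disjoint x.1 x.2)
    (hne : (supp x).Nonempty) : klam k t c (nsv x) = - klam k t c x := by
  have hsupp : supp (nsv x) = supp x := supp_nsv x
  have hsgn : sgn (nsv x) ↔ ¬ sgn x := sgn_nsv_iff x hd hne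
  unfold klam
  by_cases hsm : (supp x).card + 2 ≤ 2*k
  · rw [if_pos (by rw [hsupp]; exact hsm), if_pos hsm]
    by_cases hs : sgn x
    · rw [if_neg (fun h => (hsgn.1 h) hs), if_pos hs, hsupp]
    · rw [if_pos (hsgn.2 hs), if_neg hs, hsupp, neg_neg]
  · rw [if_neg (by rw [hsupp]; exact hsm), if_neg hsm]
    have hsum := supp_card_eq x hd
    by_cases hcx : k ≤ x.1.card ∧ (x.2.card < k ∨ sgn x)
    · rw [if_pos hcx]
      have hncond : ¬ (k ≤ (nsv x).1.card ∧ ((nsv x).2.card < k ∨ sgn (nsv x))) := by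
        rintro ⟨h1, h2 | h2⟩
        · show False
          have : k ≤ x.1.card := hcx.1
          have h2' : x.1.card < k := h2
          omega
        · have hnsx := hsgn.1 h2
          rcases hcx.2 with h3 | h3
          · have h1' : k ≤ x.2.card := h1
            omega
          · exact hnsx h3
      rw [if_neg hncond]
      rfl
    · rw [if_neg hcx]
      have hcond : k ≤ (nsv x).1.card ∧ ((nsv x).2.card < k ∨ sgn (nsv x)) := by
        constructor
        · exact big_else hk x hd hsm hcx
        · by_cases ha : k ≤ x.1.card
          · right
            apply hsgn.2
            push_neg at hcx
            exact (hcx ha).2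
          · left
            show x.1.card < k
            omega
      rw [if_pos hcond, neg_neg]
      rfl

lemma klam_bound (hk : 0 < k) (x : SV (Fin (2*k+t))) :
    (klam k t c x).natAbs ≤ 2*k + t - 1 := by
  by_cases hsm : (supp x).card + 2 ≤ 2*k
  · rw [klam_natAbs_small hk x hsm]
    omega
  · obtain ⟨j, hj⟩ := klam_natAbs_big (c := c) hk x hsm
    have := j.is_lt
    omega

lemma klam_nc (hk : 0 < k)
    (hc : ∀ A B : Finset (Fin (2*k+t)), A.card = k → B.card = k → Disjoint A B → c A ≠ c B)
    (x y : SV (Fin (2*k+t))) (hdx : Disjoint x.1 x.2) (hnex : (supp x).Nonempty)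
    (hdy : Disjoint y.1 y.2) (hxy : sle x y) :
    klam k t c y ≠ - klam k t c x := by
  intro heq
  have habs : (klam k t c y).natAbs = (klam k t c x).natAbs := by
    rw [heq]; exact Int.natAbs_neg _
  by_cases hsx : (supp x).card + 2 ≤ 2*k <;> by_cases hsy : (supp y).card + 2 ≤ 2*k
  · -- both small
    rw [klam_natAbs_small hk y hsy, klam_natAbs_small hk x hsx] at habs
    have hxy_eq : x = y := eq_of_sle_of_card hdy hxy (le_of_eq habs)
    subst hxy_eq
    have h0 : klam k t c x = 0 := by omega
    have h1 : (klam k t c x).natAbs = (supp x).card := klam_natAbs_small hk x hsx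
    rw [h0] at h1
    simp at h1
    have := Finset.card_pos.2 hnex
    omega
  · -- x small, y big
    rw [klam_natAbs_small hk x hsx] at habs
    obtain ⟨j, hj⟩ := klam_natAbs_big (c := c) hk y hsy
    rw [hj] at habs
    omega
  · -- x big, y small
    rw [klam_natAbs_small hk y hsy] at habs
    obtain ⟨j, hj⟩ := klam_natAbs_big (c := c) hk x hsx
    rw [hj] at habs
    omega
  · -- both big
    unfold klam at heq
    rw [if_neg hsy, if_neg hsx] at heq
    by_cases hcx : k ≤ x.1.card ∧ (x.2.card < k ∨ sgn x) <;>
      by_cases hcy : k ≤ y.1.card ∧ (y.2.card < k ∨ sgn y)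
    · -- both positive
      rw [if_pos hcy, if_pos hcx] at heq
      omega
    · -- x positive, y negative
      rw [if_neg hcy, if_pos hcx] at heq
      have hvals : (c (pickk k y.2) : ℕ) = (c (pickk k x.1) : ℕ) := by omega
      have hfin : c (pickk k y.2) = c (pickk k x.1) := Fin.ext hvals
      have hky2 : k ≤ y.2.card := big_else hk y hdy hsy hcy
      apply hc (pickk k x.1) (pickk k y.2) (pickk_card k _ hcx.1) (pickk_card k _ hky2) ?_ hfin.symm
      apply Finset.disjoint_of_subset_left ((pickk_subset k x.1).trans hxy.1)
      exact Finset.disjoint_of_subset_right (pickk_subset k y.2) hdy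
    · -- x negative, y positive
      rw [if_pos hcy, if_neg hcx] at heq
      have hvals : (c (pickk k y.1) : ℕ) = (c (pickk k x.2) : ℕ) := by omega
      have hfin : c (pickk k y.1) = c (pickk k x.2) := Fin.ext hvals
      have hkx2 : k ≤ x.2.card := big_else hk x hdx hsx hcx
      apply hc (pickk k y.1) (pickk k x.2) (pickk_card k _ hcy.1) (pickk_card k _ hkx2) ?_ hfin
      apply Finset.disjoint_of_subset_right ((pickk_subset k x.2).trans hxy.2)
      exact Finset.disjoint_of_subset_left (pickk_subset k y.1) hdy
    · -- both negative
      rw [if_neg hcy, if_neg hcx] at heq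
      omega

theorem kneser_core' (t k : ℕ) (hk : 0 < k) (c : Finset (Fin (2*k+t)) → Fin (t+1))
    (hc : ∀ A B : Finset (Fin (2*k+t)), A.card = k → B.card = k → Disjoint A B → c A ≠ c B) :
    False := by
  have hU : (Finset.univ : Finset (Fin (2*k+t))).Nonempty := by
    refine ⟨⟨0, by omega⟩, Finset.mem_univ _⟩
  obtain ⟨x, hval, hbig⟩ := otl_exists Finset.univ hU (klam k t c)
    (fun x hx => klam_anti hk x hx.1 hx.2.2)
    (fun x y hx hy hle => klam_nc hk hc x y hx.1 hx.2.2 hy.1 hle)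
  have hbound := klam_bound (c := c) hk x
  rw [Finset.card_univ, Fintype.card_fin] at hbig
  omega

end KneserMain

end KneserOTL



-- The hard combinatorial core (Kneser–Lovász), to be proven later.
theorem kneser_core (t k : ℕ) (hk : 0 < k) (c : Finset (Fin (2*k+t)) → Fin (t+1))
    (hc : ∀ A B : Finset (Fin (2*k+t)), A.card = k → B.card = k → Disjoint A B → c A ≠ c B) :
    False := KneserOTL.kneser_core' t k hk c hc

section Glue

variable (n k : ℕ)

def KV (n k : ℕ) : Type := {s : Finset (Fin n) // s.card = k}

instance : Fintype (KV n k) := by unfold KV; infer_instance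

def KG (n k : ℕ) : SimpleGraph (KV n k) where
  Adj v w := Disjoint v.val w.val ∧ v ≠ w
  symm := ⟨by rintro v w ⟨h1, h2⟩; exact ⟨h1.symm, h2.symm⟩⟩
  loopless := ⟨by rintro v ⟨h1, h2⟩; exact h2 rfl⟩

lemma KG_cover (t : ℕ) (hk : 0 < k) : HasCover (KG (2*k+t) k) (2*k+t) (2*k) := by
  set N := 2*k+t with hN
  classical
  set W : Fin N → Set (KV N k) := fun i => {v : KV N k | i ∈ v.val} with hW
  set X : Fin N → Set (Sym2 (KV N k)) := fun i =>
    {e | e ∈ (KG N k).edgeSet ∧ ∃ a b, e = s(a, b) ∧ a ∈ W i ∧ b ∉ W i} with hX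
  refine ⟨X, fun i => ⟨W i, rfl⟩, ?_⟩
  intro e he
  induction e with
  | h x y =>
    have hadj : (KG N k).Adj x y := he
    have hdisj : Disjoint x.val y.val := hadj.1
    have hcard : (x.val ∪ y.val).card = 2*k := by
      rw [Finset.card_union_of_disjoint hdisj, x.2, y.2]; omega
    rw [← hcard]
    apply Finset.card_le_card
    intro i hi
    simp only [Finset.mem_filter, Finset.mem_univ, true_and]
    rcases Finset.mem_union.1 hi with h | h
    · exact ⟨he, x, y, rfl, h, fun hy => (Finset.disjoint_left.1 hdisj h) hy⟩
    · exact ⟨he, y, x, Sym2.eq_swap, h, fun hx => (Finset.disjoint_left.1 hdisj hx) h⟩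

lemma KG_not_colorable (t k : ℕ) (hk : 0 < k) : ¬ (KG (2*k+t) k).Colorable (t+1) := by
  rintro ⟨C⟩
  refine kneser_core t k hk (fun A => if h : A.card = k then C ⟨A, h⟩ else 0) ?_
  intro A B hA hB hAB
  simp only [dif_pos hA, dif_pos hB]
  intro hcol
  have hne : (⟨A, hA⟩ : KV (2*k+t) k) ≠ ⟨B, hB⟩ := by
    intro h
    have : A = B := congrArg Subtype.val h
    subst this
    rw [disjoint_self] at hAB
    rw [hAB] at hA; simp at hA; omega
  exact C.valid (⟨hAB, hne⟩ : (KG (2*k+t) k).Adj ⟨A, hA⟩ ⟨B, hB⟩) hcol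

/-- For every `ε > 0` and `b` there is a graph `G` with `χ_q(G) < 2 + ε` and `χ(G) > b`. -/
theorem exists_small_chiq_large_chrom (ε : ℝ) (hε : 0 < ε) (b : ℕ) :
    ∃ (V : Type) (_ : Fintype V) (G : SimpleGraph V),
      2 / (2 - cutCover G) < 2 + ε ∧ (b : ℕ∞) < G.chromaticNumber := by
  set t := b
  set k := ⌈(t:ℝ) * (2+ε) / (2*ε)⌉₊ + t + 1 with hkdef
  have hk : 0 < k := by positivity
  refine ⟨KV (2*k+t) k, inferInstance, KG (2*k+t) k, ?_, ?_⟩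
  · -- cut cover bound
    have hcov : HasCover (KG (2*k+t) k) (2*k+t) (2*k) := KG_cover k t hk
    have hmem : ((2*k+t : ℕ) : ℝ) / ((2*k : ℕ) : ℝ) ∈
        { q : ℝ | ∃ n k' : ℕ, 0 < k' ∧ q = n / k' ∧ HasCover (KG (2*k+t) k) n k' } :=
      ⟨2*k+t, 2*k, by omega, rfl, hcov⟩
    have hbdd : BddBelow { q : ℝ | ∃ n k' : ℕ, 0 < k' ∧ q = n / k' ∧ HasCover (KG (2*k+t) k) n k' } := by
      refine ⟨0, fun q hq => ?_⟩
      obtain ⟨n', k', _, rfl, -⟩ := hq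
      positivity
    have hle : cutCover (KG (2*k+t) k) ≤ ((2*k+t : ℕ) : ℝ) / ((2*k : ℕ) : ℝ) :=
      csInf_le hbdd hmem
    -- arithmetic
    have hkR : ((t:ℝ) * (2+ε)) / (2*ε) < (k:ℝ) := by
      have h1 : ((t:ℝ) * (2+ε) / (2*ε)) ≤ (⌈(t:ℝ) * (2+ε) / (2*ε)⌉₊ : ℝ) := Nat.le_ceil _
      have h2 : ((⌈(t:ℝ) * (2+ε) / (2*ε)⌉₊ : ℕ) : ℝ) < (k:ℝ) := by
        rw [hkdef]; push_cast; linarith [(Nat.cast_nonneg t : (0:ℝ) ≤ (t:ℝ))]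
      linarith
    have htk : (t:ℝ) < 2*k := by
      have : t < k := by rw [hkdef]; omega
      have := (Nat.cast_lt (α := ℝ)).2 this
      have h0 : (0:ℝ) ≤ k := Nat.cast_nonneg k
      linarith
    have hr2 : ((2*k+t : ℕ) : ℝ) / ((2*k : ℕ) : ℝ) < 2 := by
      rw [div_lt_iff₀ (by push_cast; linarith)]
      push_cast; linarith
    have hpos : (0:ℝ) < 2 - ((2*k+t : ℕ) : ℝ) / ((2*k : ℕ) : ℝ) := by linarith
    have hposc : (0:ℝ) < 2 - cutCover (KG (2*k+t) k) := by linarith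
    have step1 : 2 / (2 - cutCover (KG (2*k+t) k)) ≤ 2 / (2 - ((2*k+t : ℕ) : ℝ) / ((2*k : ℕ) : ℝ)) := by
      apply div_le_div_of_nonneg_left (by norm_num) hpos
      linarith
    have step2 : 2 / (2 - ((2*k+t : ℕ) : ℝ) / ((2*k : ℕ) : ℝ)) < 2 + ε := by
      rw [div_lt_iff₀ hpos]
      have hkpos : (0:ℝ) < (2*k:ℝ) := by positivity
      have expand : ((2*k+t : ℕ) : ℝ) / ((2*k : ℕ) : ℝ) = 1 + (t:ℝ)/(2*k:ℝ) := by
        push_cast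
        field_simp
      rw [expand]
      have key : (2+ε) * ((t:ℝ)/(2*k:ℝ)) < ε := by
        have h5 : (t:ℝ)*(2+ε) < 2*ε*k := by
          rw [div_lt_iff₀ (by positivity)] at hkR
          linarith
        have h6 : (2+ε) * ((t:ℝ)/(2*k:ℝ)) = ((2+ε)*(t:ℝ))/(2*(k:ℝ)) := by ring
        rw [h6, div_lt_iff₀ hkpos]
        nlinarith
      nlinarith
    linarith
  · -- chromatic number
    have hnc : ¬ (KG (2*k+t) k).Colorable (t+1) := KG_not_colorable t k hk
    have hncb : ¬ (KG (2*k+t) k).Colorable b := fun h => hnc (h.mono (by omega))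
    rw [← not_le]
    intro hle
    rw [SimpleGraph.chromaticNumber_le_iff_colorable] at hle
    exact hncb hle

end Glue
end

section
/- If G' and G'' are graphs sharing at most one vertex, then x(G' ∪ G'') = max{x(G'), x(G'')}. -/
attribute [local instance] Classical.propDecidable

namespace CutCoverAux

open SimpleGraph Finset

variable {V : Type*}

/-- The cut determined by a vertex set `W`. -/
def cutSet (G : SimpleGraph V) (W : Set V) : Set (Sym2 V) :=
  {e | e ∈ G.edgeSet ∧ ∃ a b, e = s(a, b) ∧ a ∈ W ∧ b ∉ W}

lemma isCut_cutSet (G : SimpleGraph V) (W : Set V) : IsCut G (cutSet G W) := ⟨W, rfl⟩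

lemma cutSet_compl (G : SimpleGraph V) (W : Set V) : cutSet G Wᶜ = cutSet G W := by
  ext e
  constructor <;> rintro ⟨he, a, b, rfl, ha, hb⟩ <;>
    exact ⟨he, b, a, Sym2.eq_swap, by simpa using hb, by simpa using ha⟩

/-- Merging two cut vertex-sets, assuming they agree on shared support vertices. -/
lemma merge_consistent (G' G'' : SimpleGraph V)
    (h : (G'.support ∩ G''.support).Subsingleton) (W' W'' : Set V)
    (hc : ∀ v ∈ G'.support ∩ G''.support, (v ∈ W' ↔ v ∈ W'')) :
    ∃ W : Set V, cutSet G' W' ⊆ cutSet (G' ⊔ G'') W ∧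
      cutSet G'' W'' ⊆ cutSet (G' ⊔ G'') W := by
  refine ⟨(W' ∩ G'.support) ∪ (W'' ∩ G''.support), ?_, ?_⟩
  · rintro e ⟨he, a, b, rfl, ha, hb⟩
    have hab : G'.Adj a b := he
    have haS : a ∈ G'.support := ⟨b, hab⟩
    have hbS : b ∈ G'.support := ⟨a, hab.symm⟩
    refine ⟨Or.inl he, a, b, rfl, Or.inl ⟨ha, haS⟩, ?_⟩
    rintro (⟨hbW, _⟩ | ⟨hbW, hbS''⟩)
    · exact hb hbW
    · exact hb ((hc b ⟨hbS, hbS''⟩).mpr hbW)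
  · rintro e ⟨he, a, b, rfl, ha, hb⟩
    have hab : G''.Adj a b := he
    have haS : a ∈ G''.support := ⟨b, hab⟩
    have hbS : b ∈ G''.support := ⟨a, hab.symm⟩
    refine ⟨Or.inr he, a, b, rfl, Or.inr ⟨ha, haS⟩, ?_⟩
    rintro (⟨hbW, hbS'⟩ | ⟨hbW, _⟩)
    · exact hb ((hc b ⟨hbS', hbS⟩).mp hbW)
    · exact hb hbW

lemma merge (G' G'' : SimpleGraph V)
    (h : (G'.support ∩ G''.support).Subsingleton) (W' W'' : Set V) :
    ∃ W : Set V, cutSet G' W' ⊆ cutSet (G' ⊔ G'') W ∧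
      cutSet G'' W'' ⊆ cutSet (G' ⊔ G'') W := by
  by_cases hc : ∀ v ∈ G'.support ∩ G''.support, (v ∈ W' ↔ v ∈ W'')
  · exact merge_consistent G' G'' h W' W'' hc
  · push_neg at hc
    obtain ⟨v0, hv0, hne⟩ := hc
    obtain ⟨W, h1, h2⟩ := merge_consistent G' G'' h W' W''ᶜ (by
      intro v hv
      have hv0' : v = v0 := h hv hv0
      subst hv0'
      simp only [Set.mem_compl_iff]
      tauto)
    rw [cutSet_compl] at h2
    exact ⟨W, h1, h2⟩

lemma hasCover_of_le {G H : SimpleGraph V} (hGH : G ≤ H) {n k : ℕ}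
    (hc : HasCover H n k) : HasCover G n k := by
  obtain ⟨X, hX, hcov⟩ := hc
  choose W hW using hX
  refine ⟨fun i => cutSet G (W i), fun i => isCut_cutSet _ _, fun e he => ?_⟩
  refine le_trans (hcov e (SimpleGraph.edgeSet_mono hGH he)) (Finset.card_le_card ?_)
  intro i hi
  simp only [Finset.mem_filter, Finset.mem_univ, true_and] at hi ⊢
  rw [hW i] at hi
  exact ⟨he, hi.2⟩

lemma hasCover_card [Fintype V] (G : SimpleGraph V) : HasCover G (Fintype.card V) 2 := by
  let eV := Fintype.equivFin V
  refine ⟨fun i => cutSet G {eV.symm i}, fun i => isCut_cutSet _ _, ?_⟩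
  intro e he
  induction e with
  | h a b =>
    have hab : G.Adj a b := he
    have hne : a ≠ b := hab.ne
    have h1 : eV a ∈ Finset.univ.filter (fun i => s(a, b) ∈ cutSet G {eV.symm i}) := by
      simp only [Finset.mem_filter, Finset.mem_univ, true_and]
      exact ⟨he, a, b, rfl, by simp [eV], by simp [eV, hne.symm]⟩
    have h2 : eV b ∈ Finset.univ.filter (fun i => s(a, b) ∈ cutSet G {eV.symm i}) := by
      simp only [Finset.mem_filter, Finset.mem_univ, true_and]
      exact ⟨he, b, a, Sym2.eq_swap, by simp [eV], by simp [eV, hne]⟩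
    exact Finset.one_lt_card.mpr ⟨eV a, h1, eV b, h2, fun hEq => hne (eV.injective hEq)⟩

lemma pos_of_hasCover {G : SimpleGraph V} {n k : ℕ} (he : G.edgeSet.Nonempty)
    (hk : 0 < k) (hc : HasCover G n k) : 0 < n := by
  rcases Nat.eq_zero_or_pos n with rfl | h
  · obtain ⟨X, _, hcov⟩ := hc
    obtain ⟨e, he⟩ := he
    have := hcov e he
    simp only [Finset.univ_eq_empty, Finset.filter_empty, Finset.card_empty] at this
    omega
  · exact h

lemma hasCover_sup (G' G'' : SimpleGraph V)
    (h : (G'.support ∩ G''.support).Subsingleton) {n1 k1 n2 k2 : ℕ}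
    (h1 : HasCover G' n1 k1) (h2 : HasCover G'' n2 k2) :
    HasCover (G' ⊔ G'') (n1 * n2) (min (k1 * n2) (k2 * n1)) := by
  obtain ⟨X1, hX1, hcov1⟩ := h1
  obtain ⟨X2, hX2, hcov2⟩ := h2
  choose W1 hW1 using hX1
  choose W2 hW2 using hX2
  choose Wc hc1 hc2 using fun i j => merge G' G'' h (W1 i) (W2 j)
  set Y : Fin n1 × Fin n2 → Set (Sym2 V) := fun p => cutSet (G' ⊔ G'') (Wc p.1 p.2) with hY
  refine ⟨fun idx => Y (finProdFinEquiv.symm idx), fun idx => isCut_cutSet _ _, ?_⟩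
  intro e he
  have hcard : (Finset.univ.filter fun p : Fin n1 × Fin n2 => e ∈ Y p).card =
      (Finset.univ.filter fun idx => e ∈ Y (finProdFinEquiv.symm idx)).card := by
    apply Finset.card_equiv finProdFinEquiv
    intro p
    simp only [Finset.mem_filter, Finset.mem_univ, true_and, Equiv.symm_apply_apply]
  rw [← hcard]
  rcases (SimpleGraph.edgeSet_sup G' G'' ▸ he : e ∈ G'.edgeSet ∪ G''.edgeSet) with he' | he'
  · refine le_trans (min_le_left _ _) ?_
    have hsub : ((Finset.univ.filter fun i => e ∈ X1 i) ×ˢ Finset.univ) ⊆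
        Finset.univ.filter fun p : Fin n1 × Fin n2 => e ∈ Y p := by
      rintro ⟨i, j⟩ hij
      simp only [Finset.mem_product, Finset.mem_filter, Finset.mem_univ, true_and] at hij ⊢
      have hx := hij.1
      rw [hW1 i] at hx
      exact hc1 i j hx
    calc k1 * n2 ≤ (Finset.univ.filter fun i => e ∈ X1 i).card * n2 :=
          Nat.mul_le_mul_right _ (hcov1 e he')
      _ = ((Finset.univ.filter fun i => e ∈ X1 i) ×ˢ Finset.univ).card := by
          rw [Finset.card_product, Finset.card_univ, Fintype.card_fin]
      _ ≤ _ := Finset.card_le_card hsub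
  · refine le_trans (min_le_right _ _) ?_
    have hsub : (Finset.univ ×ˢ (Finset.univ.filter fun j => e ∈ X2 j)) ⊆
        Finset.univ.filter fun p : Fin n1 × Fin n2 => e ∈ Y p := by
      rintro ⟨i, j⟩ hij
      simp only [Finset.mem_product, Finset.mem_filter, Finset.mem_univ, true_and] at hij ⊢
      have hx := hij
      rw [hW2 j] at hx
      exact hc2 i j hx
    calc k2 * n1 ≤ (Finset.univ.filter fun j => e ∈ X2 j).card * n1 :=
          Nat.mul_le_mul_right _ (hcov2 e he')
      _ = (Finset.univ ×ˢ (Finset.univ.filter fun j => e ∈ X2 j)).card := by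
          rw [Finset.card_product, Finset.card_univ, Fintype.card_fin, Nat.mul_comm]
      _ ≤ _ := Finset.card_le_card hsub

lemma ratio_eq {n1 n2 k1 k2 : ℕ} (hn1 : 0 < n1) (hn2 : 0 < n2)
    (hk1 : 0 < k1) (hk2 : 0 < k2) :
    ((n1 * n2 : ℕ) : ℝ) / ((min (k1 * n2) (k2 * n1) : ℕ) : ℝ) =
      max ((n1 : ℝ) / k1) ((n2 : ℝ) / k2) := by
  have hk1' : (0:ℝ) < k1 := by exact_mod_cast hk1
  have hk2' : (0:ℝ) < k2 := by exact_mod_cast hk2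
  have hn1' : (0:ℝ) < n1 := by exact_mod_cast hn1
  have hn2' : (0:ℝ) < n2 := by exact_mod_cast hn2
  rcases le_total (k1 * n2) (k2 * n1) with hle | hle
  · rw [min_eq_left hle]
    have hle' : (k1:ℝ) * n2 ≤ (k2:ℝ) * n1 := by exact_mod_cast hle
    have hmax : (n2:ℝ)/k2 ≤ (n1:ℝ)/k1 := by
      rw [div_le_div_iff₀ hk2' hk1']
      nlinarith
    rw [max_eq_left hmax]
    push_cast
    field_simp
  · rw [min_eq_right hle]
    have hle' : (k2:ℝ) * n1 ≤ (k1:ℝ) * n2 := by exact_mod_cast hle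
    have hmax : (n1:ℝ)/k1 ≤ (n2:ℝ)/k2 := by
      rw [div_le_div_iff₀ hk1' hk2']
      nlinarith
    rw [max_eq_right hmax]
    push_cast
    field_simp

end CutCoverAux

open CutCoverAux in
/-- If `G'` and `G''` share at most one vertex, then `x(G' ∪ G'') = max {x(G'), x(G'')}`. -/
theorem cutCover_union {V : Type*} [Fintype V] (G' G'' : SimpleGraph V)
    (h : (G'.support ∩ G''.support).Subsingleton)
    (h' : G'.edgeSet.Nonempty) (h'' : G''.edgeSet.Nonempty) :
    cutCover (G' ⊔ G'') = max (cutCover G') (cutCover G'') := by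
  set S : SimpleGraph V → Set ℝ :=
    fun G => { q : ℝ | ∃ n k : ℕ, 0 < k ∧ q = n / k ∧ HasCover G n k } with hS
  have hbdd : ∀ G : SimpleGraph V, BddBelow (S G) := by
    rintro G
    refine ⟨0, ?_⟩
    rintro q ⟨n, k, hk, rfl, -⟩
    positivity
  have hne : ∀ G : SimpleGraph V, (S G).Nonempty := fun G =>
    ⟨(Fintype.card V : ℝ) / 2, Fintype.card V, 2, by norm_num, by norm_num, hasCover_card G⟩
  have hcc : ∀ G : SimpleGraph V, cutCover G = sInf (S G) := fun G => rfl
  apply le_antisymm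
  · apply le_of_forall_pos_le_add
    intro ε hε
    obtain ⟨q1, hq1, hq1lt⟩ := Real.lt_sInf_add_pos (hne G') hε
    obtain ⟨q2, hq2, hq2lt⟩ := Real.lt_sInf_add_pos (hne G'') hε
    obtain ⟨n1, k1, hk1, rfl, hcov1⟩ := hq1
    obtain ⟨n2, k2, hk2, rfl, hcov2⟩ := hq2
    have hn1 : 0 < n1 := pos_of_hasCover h' hk1 hcov1
    have hn2 : 0 < n2 := pos_of_hasCover h'' hk2 hcov2
    have hmem : ((n1 * n2 : ℕ) : ℝ) / ((min (k1 * n2) (k2 * n1) : ℕ) : ℝ) ∈ S (G' ⊔ G'') :=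
      ⟨n1 * n2, min (k1 * n2) (k2 * n1),
        lt_min (Nat.mul_pos hk1 hn2) (Nat.mul_pos hk2 hn1), rfl,
        hasCover_sup G' G'' h hcov1 hcov2⟩
    have hle := csInf_le (hbdd _) hmem
    rw [ratio_eq hn1 hn2 hk1 hk2] at hle
    calc cutCover (G' ⊔ G'') ≤ max ((n1:ℝ)/k1) ((n2:ℝ)/k2) := hle
      _ ≤ max (sInf (S G') + ε) (sInf (S G'') + ε) := max_le_max hq1lt.le hq2lt.le
      _ = max (cutCover G') (cutCover G'') + ε := by rw [max_add_add_right, hcc G', hcc G'']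
  · apply max_le
    · exact csInf_le_csInf (hbdd _) (hne (G' ⊔ G''))
        (fun q ⟨n, k, hk, hq, hcov⟩ => ⟨n, k, hk, hq, hasCover_of_le le_sup_left hcov⟩)
    · exact csInf_le_csInf (hbdd _) (hne (G' ⊔ G''))
        (fun q ⟨n, k, hk, hq, hcov⟩ => ⟨n, k, hk, hq, hasCover_of_le le_sup_right hcov⟩)
end

section
/- For graphs G1, G2, x(G1 □ G2) = max{x(G1), x(G2)}, where □ is the Cartesian product. -/
attribute [local instance] Classical.propDecidable

open Finset

namespace CCAux

def cutSetOf {V : Type*} (G : SimpleGraph V) (W : Set V) : Set (Sym2 V) :=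
  {e | e ∈ G.edgeSet ∧ ∃ a b, e = s(a, b) ∧ a ∈ W ∧ b ∉ W}

lemma isCut_cutSetOf {V : Type*} (G : SimpleGraph V) (W : Set V) :
    IsCut G (cutSetOf G W) := ⟨W, rfl⟩

lemma mem_cutSetOf {V : Type*} (G : SimpleGraph V) (W : Set V) (a b : V) :
    s(a, b) ∈ cutSetOf G W ↔ G.Adj a b ∧ ((a ∈ W ∧ b ∉ W) ∨ (b ∈ W ∧ a ∉ W)) := by
  constructor
  · rintro ⟨he, x, y, hxy, hx, hy⟩
    rw [SimpleGraph.mem_edgeSet] at he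
    refine ⟨he, ?_⟩
    rw [Sym2.eq_iff] at hxy
    rcases hxy with ⟨rfl, rfl⟩ | ⟨rfl, rfl⟩
    · exact Or.inl ⟨hx, hy⟩
    · exact Or.inr ⟨hx, hy⟩
  · rintro ⟨hadj, h⟩
    refine ⟨(SimpleGraph.mem_edgeSet G).mpr hadj, ?_⟩
    rcases h with ⟨hx, hy⟩ | ⟨hx, hy⟩
    · exact ⟨a, b, rfl, hx, hy⟩
    · exact ⟨b, a, Sym2.eq_swap, hx, hy⟩

lemma card_filter_equiv {α β : Type*} [Fintype α] [Fintype β] (σ : α ≃ β)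
    (P : β → Prop) :
    (univ.filter fun a => P (σ a)).card = (univ.filter P).card := by
  apply Finset.card_bij (fun a _ => σ a)
  · intro a ha; simp only [mem_filter, mem_univ, true_and] at ha ⊢; exact ha
  · intro a _ b _ h; exact σ.injective h
  · intro b hb
    refine ⟨σ.symm b, ?_, by simp⟩
    simp only [mem_filter, mem_univ, true_and] at hb ⊢
    simpa using hb

lemma card_filter_fst {α β : Type*} [Fintype α] [Fintype β] (P : α → Prop) :
    (univ.filter fun p : α × β => P p.1).card
      = (univ.filter P).card * Fintype.card β := by
  rw [← Fintype.card_subtype, ← Fintype.card_subtype, ← Fintype.card_prod]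
  exact Fintype.card_congr Equiv.prodSubtypeFstEquivSubtypeProd

lemma card_filter_snd {α β : Type*} [Fintype α] [Fintype β] (P : β → Prop) :
    (univ.filter fun p : α × β => P p.2).card
      = Fintype.card α * (univ.filter P).card := by
  rw [← Fintype.card_subtype, ← Fintype.card_subtype, ← Fintype.card_prod]
  refine Fintype.card_congr ((Equiv.prodComm α β).subtypeEquiv (fun p => Iff.rfl)
    |>.trans Equiv.prodSubtypeFstEquivSubtypeProd |>.trans (Equiv.prodComm _ _))

/-- Every finite graph has a trivial 1-cover by vertex stars. -/
lemma hasCover_card {V : Type*} [Fintype V] (G : SimpleGraph V) :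
    HasCover G (Fintype.card V) 1 := by
  refine ⟨fun i => cutSetOf G {(Fintype.equivFin V).symm i},
    fun i => isCut_cutSetOf _ _, ?_⟩
  intro e he
  induction e with
  | h a b =>
    rw [SimpleGraph.mem_edgeSet] at he
    rw [Nat.one_le_iff_ne_zero, ← Nat.pos_iff_ne_zero, Finset.card_pos]
    refine ⟨Fintype.equivFin V a, ?_⟩
    simp only [mem_filter, mem_univ, true_and]
    rw [mem_cutSetOf]
    refine ⟨he, Or.inl ⟨by simp, ?_⟩⟩
    simp only [Set.mem_singleton_iff, Equiv.symm_apply_apply]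
    exact fun h => he.ne' h

/-- Restriction of a cover of the box product to the first factor. -/
lemma hasCover_of_boxProd_left {V₁ V₂ : Type*} [Fintype V₁] [Fintype V₂]
    (G₁ : SimpleGraph V₁) (G₂ : SimpleGraph V₂) (c₀ : V₂) {n k : ℕ}
    (h : HasCover (G₁.boxProd G₂) n k) : HasCover G₁ n k := by
  obtain ⟨X, hX, hcov⟩ := h
  choose W hW using hX
  have hW : ∀ i, X i = cutSetOf (G₁.boxProd G₂) (W i) := hW
  refine ⟨fun i => cutSetOf G₁ {a | (a, c₀) ∈ W i}, fun i => isCut_cutSetOf _ _, ?_⟩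
  intro e he
  induction e with
  | h a b =>
    rw [SimpleGraph.mem_edgeSet] at he
    have hadj : (G₁.boxProd G₂).Adj (a, c₀) (b, c₀) := Or.inl ⟨he, rfl⟩
    have key : ∀ i, (s(a, b) ∈ cutSetOf G₁ {a | (a, c₀) ∈ W i} ↔
        s((a, c₀), (b, c₀)) ∈ X i) := by
      intro i
      rw [hW i, mem_cutSetOf, mem_cutSetOf]
      constructor
      · rintro ⟨-, h⟩; exact ⟨hadj, h⟩
      · rintro ⟨-, h⟩; exact ⟨he, h⟩
    calc k ≤ (univ.filter fun i => s((a, c₀), (b, c₀)) ∈ X i).card :=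
            hcov _ ((SimpleGraph.mem_edgeSet _).mpr hadj)
      _ = _ := by
            congr 1
            apply Finset.filter_congr
            intro i _
            simp [key i]

/-- Restriction of a cover of the box product to the second factor. -/
lemma hasCover_of_boxProd_right {V₁ V₂ : Type*} [Fintype V₁] [Fintype V₂]
    (G₁ : SimpleGraph V₁) (G₂ : SimpleGraph V₂) (c₀ : V₁) {n k : ℕ}
    (h : HasCover (G₁.boxProd G₂) n k) : HasCover G₂ n k := by
  obtain ⟨X, hX, hcov⟩ := h
  choose W hW using hX
  have hW : ∀ i, X i = cutSetOf (G₁.boxProd G₂) (W i) := hW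
  refine ⟨fun i => cutSetOf G₂ {a | (c₀, a) ∈ W i}, fun i => isCut_cutSetOf _ _, ?_⟩
  intro e he
  induction e with
  | h a b =>
    rw [SimpleGraph.mem_edgeSet] at he
    have hadj : (G₁.boxProd G₂).Adj (c₀, a) (c₀, b) := Or.inr ⟨he, rfl⟩
    have key : ∀ i, (s(a, b) ∈ cutSetOf G₂ {a | (c₀, a) ∈ W i} ↔
        s((c₀, a), (c₀, b)) ∈ X i) := by
      intro i
      rw [hW i, mem_cutSetOf, mem_cutSetOf]
      constructor
      · rintro ⟨-, h⟩; exact ⟨hadj, h⟩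
      · rintro ⟨-, h⟩; exact ⟨he, h⟩
    calc k ≤ (univ.filter fun i => s((c₀, a), (c₀, b)) ∈ X i).card :=
            hcov _ ((SimpleGraph.mem_edgeSet _).mpr hadj)
      _ = _ := by
            congr 1
            apply Finset.filter_congr
            intro i _
            simp [key i]

/-- Combination of covers of the factors into a cover of the box product,
using "xor" cuts. -/
lemma hasCover_boxProd {V₁ V₂ : Type*} [Fintype V₁] [Fintype V₂]
    (G₁ : SimpleGraph V₁) (G₂ : SimpleGraph V₂) {n k m l : ℕ}
    (h1 : HasCover G₁ n k) (h2 : HasCover G₂ m l) :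
    HasCover (G₁.boxProd G₂) (n * m) (min (k * m) (l * n)) := by
  obtain ⟨X, hX, hcov1⟩ := h1
  obtain ⟨Y, hY, hcov2⟩ := h2
  choose W hW using hX
  have hW : ∀ i, X i = cutSetOf G₁ (W i) := hW
  choose U hU using hY
  have hU : ∀ j, Y j = cutSetOf G₂ (U j) := hU
  set σ : Fin (n * m) ≃ Fin n × Fin m := finProdFinEquiv.symm with hσ
  set Z : Fin n × Fin m → Set (V₁ × V₂) :=
    fun p => {v | v.1 ∈ W p.1 ↔ v.2 ∉ U p.2} with hZ
  refine ⟨fun t => cutSetOf (G₁.boxProd G₂) (Z (σ t)),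
    fun t => isCut_cutSetOf _ _, ?_⟩
  intro e he
  induction e with
  | h u v =>
    obtain ⟨a, c⟩ := u
    obtain ⟨b, d⟩ := v
    rw [SimpleGraph.mem_edgeSet, SimpleGraph.boxProd_adj] at he
    rcases he with ⟨ha, hc⟩ | ⟨ha, hc⟩
    · -- a G₁-type edge
      simp only at ha hc
      subst hc
      have hadj : (G₁.boxProd G₂).Adj (a, c) (b, c) := Or.inl ⟨ha, rfl⟩
      have key : ∀ p : Fin n × Fin m,
          (s((a, c), (b, c)) ∈ cutSetOf (G₁.boxProd G₂) (Z p) ↔ s(a, b) ∈ X p.1) := by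
        intro p
        rw [hW p.1, mem_cutSetOf, mem_cutSetOf]
        constructor
        · rintro ⟨-, h⟩
          refine ⟨ha, ?_⟩
          simp only [hZ, Set.mem_setOf_eq] at h
          tauto
        · rintro ⟨-, h⟩
          refine ⟨hadj, ?_⟩
          simp only [hZ, Set.mem_setOf_eq]
          tauto
      calc min (k * m) (l * n) ≤ k * m := min_le_left _ _
        _ ≤ (univ.filter fun i => s(a, b) ∈ X i).card * m :=
            Nat.mul_le_mul_right m (hcov1 _ ((SimpleGraph.mem_edgeSet G₁).mpr ha))
        _ = (univ.filter fun p : Fin n × Fin m => s(a, b) ∈ X p.1).card := by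
            simpa using (card_filter_fst (β := Fin m) fun i => s(a, b) ∈ X i).symm
        _ = (univ.filter fun p : Fin n × Fin m =>
              s((a, c), (b, c)) ∈ cutSetOf (G₁.boxProd G₂) (Z p)).card := by
            congr 1
            apply Finset.filter_congr
            intro p _
            simp [key p]
        _ = _ := (card_filter_equiv σ _).symm
    · -- a G₂-type edge
      simp only at ha hc
      subst hc
      have hadj : (G₁.boxProd G₂).Adj (a, c) (a, d) := Or.inr ⟨ha, rfl⟩
      have key : ∀ p : Fin n × Fin m,
          (s((a, c), (a, d)) ∈ cutSetOf (G₁.boxProd G₂) (Z p) ↔ s(c, d) ∈ Y p.2) := by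
        intro p
        rw [hU p.2, mem_cutSetOf, mem_cutSetOf]
        constructor
        · rintro ⟨-, h⟩
          refine ⟨ha, ?_⟩
          simp only [hZ, Set.mem_setOf_eq] at h
          tauto
        · rintro ⟨-, h⟩
          refine ⟨hadj, ?_⟩
          simp only [hZ, Set.mem_setOf_eq]
          tauto
      calc min (k * m) (l * n) ≤ l * n := min_le_right _ _
        _ = n * l := Nat.mul_comm l n
        _ ≤ n * (univ.filter fun j => s(c, d) ∈ Y j).card :=
            Nat.mul_le_mul_left n (hcov2 _ ((SimpleGraph.mem_edgeSet G₂).mpr ha))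
        _ = (univ.filter fun p : Fin n × Fin m => s(c, d) ∈ Y p.2).card := by
            simpa using (card_filter_snd (α := Fin n) fun j => s(c, d) ∈ Y j).symm
        _ = (univ.filter fun p : Fin n × Fin m =>
              s((a, c), (a, d)) ∈ cutSetOf (G₁.boxProd G₂) (Z p)).card := by
            congr 1
            apply Finset.filter_congr
            intro p _
            simp [key p]
        _ = _ := (card_filter_equiv σ _).symm

lemma pos_of_hasCover {V : Type*} [Fintype V] {G : SimpleGraph V} {n k : ℕ}
    (h : HasCover G n k) (hk : 0 < k) (he : G.edgeSet.Nonempty) : 0 < n := by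
  obtain ⟨e, he⟩ := he
  obtain ⟨X, -, hcov⟩ := h
  have := hcov e he
  have hn : k ≤ n := by
    calc k ≤ (univ.filter fun i => e ∈ X i).card := this
      _ ≤ (univ : Finset (Fin n)).card := Finset.card_filter_le _ _
      _ = n := by simp
  omega

end CCAux

/-- `x(G₁ □ G₂) = max {x(G₁), x(G₂)}` for the Cartesian product. -/
theorem cutCover_boxProd {V₁ V₂ : Type*} [Fintype V₁] [Fintype V₂]
    (G₁ : SimpleGraph V₁) (G₂ : SimpleGraph V₂)
    (h₁ : G₁.edgeSet.Nonempty) (h₂ : G₂.edgeSet.Nonempty) :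
    cutCover (G₁.boxProd G₂) = max (cutCover G₁) (cutCover G₂) := by
  classical
  have hne₁ : Nonempty V₁ := by
    obtain ⟨e, -⟩ := h₁
    induction e with | h a b => exact ⟨a⟩
  have hne₂ : Nonempty V₂ := by
    obtain ⟨e, -⟩ := h₂
    induction e with | h a b => exact ⟨a⟩
  set S₁ : Set ℝ := { q : ℝ | ∃ n k : ℕ, 0 < k ∧ q = n / k ∧ HasCover G₁ n k } with hS₁
  set S₂ : Set ℝ := { q : ℝ | ∃ n k : ℕ, 0 < k ∧ q = n / k ∧ HasCover G₂ n k } with hS₂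
  set Sp : Set ℝ :=
    { q : ℝ | ∃ n k : ℕ, 0 < k ∧ q = n / k ∧ HasCover (G₁.boxProd G₂) n k } with hSp
  have bdd : ∀ T : Set ℝ,
      (∀ q ∈ T, ∃ n k : ℕ, 0 < k ∧ q = (n : ℝ) / k) → BddBelow T := by
    intro T hT
    refine ⟨0, fun q hq => ?_⟩
    obtain ⟨n, k, -, rfl⟩ := hT q hq
    positivity
  have bdd₁ : BddBelow S₁ := bdd _ (by rintro q ⟨n, k, hk, rfl, -⟩; exact ⟨n, k, hk, rfl⟩)
  have bdd₂ : BddBelow S₂ := bdd _ (by rintro q ⟨n, k, hk, rfl, -⟩; exact ⟨n, k, hk, rfl⟩)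
  have bddp : BddBelow Sp := bdd _ (by rintro q ⟨n, k, hk, rfl, -⟩; exact ⟨n, k, hk, rfl⟩)
  have ne₁ : S₁.Nonempty :=
    ⟨(Fintype.card V₁ : ℝ) / 1, Fintype.card V₁, 1, one_pos, by norm_num,
      CCAux.hasCover_card G₁⟩
  have ne₂ : S₂.Nonempty :=
    ⟨(Fintype.card V₂ : ℝ) / 1, Fintype.card V₂, 1, one_pos, by norm_num,
      CCAux.hasCover_card G₂⟩
  have nep : Sp.Nonempty :=
    ⟨(Fintype.card (V₁ × V₂) : ℝ) / 1, Fintype.card (V₁ × V₂), 1, one_pos, by norm_num,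
      CCAux.hasCover_card _⟩
  have hsub₁ : Sp ⊆ S₁ := by
    rintro q ⟨n, k, hk, rfl, hc⟩
    exact ⟨n, k, hk, rfl, CCAux.hasCover_of_boxProd_left G₁ G₂ (Classical.arbitrary V₂) hc⟩
  have hsub₂ : Sp ⊆ S₂ := by
    rintro q ⟨n, k, hk, rfl, hc⟩
    exact ⟨n, k, hk, rfl, CCAux.hasCover_of_boxProd_right G₁ G₂ (Classical.arbitrary V₁) hc⟩
  have hcc : cutCover (G₁.boxProd G₂) = sInf Sp := rfl
  have hcc₁ : cutCover G₁ = sInf S₁ := rfl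
  have hcc₂ : cutCover G₂ = sInf S₂ := rfl
  rw [hcc, hcc₁, hcc₂]
  apply le_antisymm
  · by_contra hlt
    push_neg at hlt
    obtain ⟨q₁, hq₁S, hq₁⟩ := exists_lt_of_csInf_lt ne₁
      (lt_of_le_of_lt (le_max_left _ _) hlt)
    obtain ⟨q₂, hq₂S, hq₂⟩ := exists_lt_of_csInf_lt ne₂
      (lt_of_le_of_lt (le_max_right _ _) hlt)
    obtain ⟨n₁, k₁, hk₁, rfl, hc₁⟩ := hq₁S
    obtain ⟨n₂, k₂, hk₂, rfl, hc₂⟩ := hq₂S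
    have hn₁ : 0 < n₁ := CCAux.pos_of_hasCover hc₁ hk₁ h₁
    have hn₂ : 0 < n₂ := CCAux.pos_of_hasCover hc₂ hk₂ h₂
    have hcomb := CCAux.hasCover_boxProd G₁ G₂ hc₁ hc₂
    have hminpos : 0 < min (k₁ * n₂) (k₂ * n₁) := by
      apply lt_min <;> positivity
    have hmem : ((n₁ * n₂ : ℕ) : ℝ) / ((min (k₁ * n₂) (k₂ * n₁) : ℕ) : ℝ) ∈ Sp :=
      ⟨n₁ * n₂, min (k₁ * n₂) (k₂ * n₁), hminpos, rfl, hcomb⟩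
    have hle : sInf Sp ≤ ((n₁ * n₂ : ℕ) : ℝ) / ((min (k₁ * n₂) (k₂ * n₁) : ℕ) : ℝ) :=
      csInf_le bddp hmem
    have hval : ((n₁ * n₂ : ℕ) : ℝ) / ((min (k₁ * n₂) (k₂ * n₁) : ℕ) : ℝ)
        ≤ max ((n₁ : ℝ) / k₁) ((n₂ : ℝ) / k₂) := by
      rcases le_total (k₁ * n₂) (k₂ * n₁) with h | h
      · rw [Nat.min_eq_left h]
        apply le_max_of_le_left
        rw [Nat.cast_mul, Nat.cast_mul]
        rw [mul_comm (k₁ : ℝ) (n₂ : ℝ), mul_comm (n₁ : ℝ) (n₂ : ℝ)]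
        rw [mul_div_mul_left _ _ (by positivity : (n₂ : ℝ) ≠ 0)]
      · rw [Nat.min_eq_right h]
        apply le_max_of_le_right
        rw [Nat.cast_mul, Nat.cast_mul]
        rw [mul_comm (k₂ : ℝ) (n₁ : ℝ)]
        rw [mul_div_mul_left _ _ (by positivity : (n₁ : ℝ) ≠ 0)]
    have : sInf Sp < sInf Sp :=
      lt_of_le_of_lt (hle.trans hval) (max_lt hq₁ hq₂)
    exact lt_irrefl _ this
  · exact max_le (csInf_le_csInf bdd₁ nep hsub₁) (csInf_le_csInf bdd₂ nep hsub₂)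
end
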